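/- arXiv:2007.06318 — 7 statements merged into one kernel-verified Lean document; each statement's English description precedes it below -/
import Mathlib

section
/- Let δ, ρ ∈ (0,1) and let v ∈ 𝕊^{n−1} be such that for every λ ∈ ℝ, the number of indices i with |vᵢ − λ| ≤ ρ/√n is less than (1−δ)n (i.e., v is non almost-constant). Then there exist disjoint subsets σ₁, σ₂ ⊆ [n] with |σ₁|, |σ₂| ≥ δn/8 such that ρ/√(2n) ≤ |vᵢ − vⱼ| ≤ 6/√(δn) for all i ∈ σ₁ and j ∈ σ₂. -/
open Finset

theorem stmt_2 (n : ℕ) (δ ρ : ℝ) (hδ : δ ∈ Set.Ioo (0:ℝ) 1) (hρ : ρ ∈ Set.Ioo (0:ℝ) 1)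
    (v : Fin n → ℝ) (hv : ∑ i, (v i)^2 = 1)
    (hnc : ∀ lam : ℝ,
      (((Finset.univ : Finset (Fin n)).filter
          (fun i => |v i - lam| ≤ ρ / Real.sqrt n)).card : ℝ) < (1 - δ) * n) :
    ∃ σ₁ σ₂ : Finset (Fin n), Disjoint σ₁ σ₂ ∧
      δ * n / 8 ≤ (σ₁.card : ℝ) ∧ δ * n / 8 ≤ (σ₂.card : ℝ) ∧
      ∀ i ∈ σ₁, ∀ j ∈ σ₂,
        ρ / Real.sqrt (2 * n) ≤ |v i - v j| ∧ |v i - v j| ≤ 6 / Real.sqrt (δ * n) := by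
  obtain ⟨hδ0, hδ1⟩ := hδ
  obtain ⟨hρ0, hρ1⟩ := hρ
  have hn0 : 0 < n := by
    rcases Nat.eq_zero_or_pos n with h | h
    · subst h; simp at hv
    · exact h
  -- n ≥ 2 from hnc with lam = v i₀
  have hn2 : (2:ℝ) ≤ n := by
    obtain ⟨i₀⟩ : Nonempty (Fin n) := ⟨⟨0, hn0⟩⟩
    have h1 := hnc (v i₀)
    have hr0 : (0:ℝ) ≤ ρ / Real.sqrt n := by positivity
    have hmem : i₀ ∈ (Finset.univ : Finset (Fin n)).filter
        (fun i => |v i - v i₀| ≤ ρ / Real.sqrt n) := by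
      simp [hr0]
    have hcard : (1:ℝ) ≤ (((Finset.univ : Finset (Fin n)).filter
        (fun i => |v i - v i₀| ≤ ρ / Real.sqrt n)).card : ℝ) := by
      have := Finset.card_pos.mpr ⟨i₀, hmem⟩
      exact_mod_cast this
    have h2 : (1:ℝ) < (1 - δ) * n := lt_of_le_of_lt hcard h1
    have hn1 : (1:ℝ) < n := by nlinarith [Nat.cast_nonneg (α := ℝ) n]
    have : 1 < n := by exact_mod_cast hn1
    have : 2 ≤ n := this
    exact_mod_cast this
  have hn1 : (1:ℝ) ≤ n := by linarith
  have hδn : (0:ℝ) < δ * n := by nlinarith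
  have hsδn : (0:ℝ) < Real.sqrt (δ * n) := Real.sqrt_pos.mpr hδn
  set c : ℝ := 2 / Real.sqrt (δ * n) with hc_def
  have hc0 : 0 < c := by positivity
  have hc2 : c ^ 2 = 4 / (δ * n) := by
    rw [hc_def, div_pow, Real.sq_sqrt hδn.le]; norm_num
  set T : Finset (Fin n) := Finset.univ.filter (fun i => |v i| ≤ c) with hT_def
  -- card of complement of T
  have hTc : (((Finset.univ : Finset (Fin n)).filter (fun i => ¬ |v i| ≤ c)).card : ℝ)
      ≤ δ * n / 4 := by
    set S := (Finset.univ : Finset (Fin n)).filter (fun i => ¬ |v i| ≤ c) with hS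
    have h1 : (S.card : ℝ) * c ^ 2 ≤ ∑ i ∈ S, (v i) ^ 2 := by
      have h := Finset.card_nsmul_le_sum S (fun i => (v i)^2) (c^2) ?_
      · simpa [nsmul_eq_mul] using h
      · intro i hi
        rw [hS, Finset.mem_filter] at hi
        have h2 : c ≤ |v i| := le_of_not_ge (by simpa using hi.2)
        calc c ^ 2 ≤ |v i| ^ 2 := by nlinarith [abs_nonneg (v i)]
          _ = (v i)^2 := sq_abs _
    have h2 : ∑ i ∈ S, (v i) ^ 2 ≤ 1 := by
      rw [← hv]
      exact Finset.sum_le_sum_of_subset_of_nonneg (Finset.subset_univ _)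
        (fun i _ _ => sq_nonneg _)
    have h3 : (S.card : ℝ) ≤ 1 / c ^ 2 := by
      rw [le_div_iff₀ (by positivity)]
      linarith
    rw [hc2] at h3
    calc (S.card : ℝ) ≤ 1 / (4 / (δ * n)) := h3
      _ = δ * n / 4 := by field_simp
  have hTcard : (n:ℝ) - δ * n / 4 ≤ (T.card : ℝ) := by
    have hsplit : T.card + ((Finset.univ : Finset (Fin n)).filter (fun i => ¬ |v i| ≤ c)).card
        = n := by
      rw [hT_def]
      simpa using Finset.card_filter_add_card_filter_not
        (s := (Finset.univ : Finset (Fin n))) (p := fun i => |v i| ≤ c)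
    have : (T.card : ℝ) + (((Finset.univ : Finset (Fin n)).filter
        (fun i => ¬ |v i| ≤ c)).card : ℝ) = n := by exact_mod_cast hsplit
    linarith
  set k : ℕ := ⌈δ * n / 8⌉₊ with hk_def
  have hk1 : 1 ≤ k := Nat.one_le_iff_ne_zero.mpr (by
    simp [hk_def, Nat.ceil_eq_zero, not_le]
    positivity)
  have hk_le : δ * n / 8 ≤ (k : ℝ) := Nat.le_ceil _
  have hk_lt : (k : ℝ) < δ * n / 8 + 1 := by
    have := Nat.ceil_lt_add_one (by positivity : (0:ℝ) ≤ δ * n / 8)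
    simpa [hk_def] using this
  have hkT : k ≤ T.card := by
    have : (k:ℝ) ≤ (T.card : ℝ) := by nlinarith
    exact_mod_cast this
  have hTne : T.Nonempty := Finset.card_pos.mp (lt_of_lt_of_le hk1 hkT)
  -- define a
  set Va := (T.image v).filter (fun t => k ≤ (T.filter (fun i => v i ≤ t)).card) with hVa_def
  have hVane : Va.Nonempty := by
    refine ⟨(T.image v).max' (hTne.image v), ?_⟩
    refine Finset.mem_filter.mpr ⟨(T.image v).max'_mem _, ?_⟩
    have : T.filter (fun i => v i ≤ (T.image v).max' (hTne.image v)) = T := by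
      apply Finset.filter_true_of_mem
      intro i hi
      exact Finset.le_max' _ _ (Finset.mem_image_of_mem v hi)
    rw [this]; exact hkT
  set a := Va.min' hVane with ha_def
  have ha_mem : k ≤ (T.filter (fun i => v i ≤ a)).card :=
    (Finset.mem_filter.mp (Va.min'_mem hVane)).2
  have ha_lt : ((T.filter (fun i => v i < a)).card : ℝ) ≤ (k:ℝ) - 1 := by
    have hlt : (T.filter (fun i => v i < a)).card < k := by
      by_contra h
      push_neg at h
      set S := T.filter (fun i => v i < a) with hS_def
      have hSne : S.Nonempty := Finset.card_pos.mp (lt_of_lt_of_le hk1 h)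
      obtain ⟨i₀, hi₀, hvi₀⟩ := Finset.mem_image.mp ((S.image v).max'_mem (hSne.image v))
      set a' := (S.image v).max' (hSne.image v) with ha'_def
      have hi₀T : i₀ ∈ T := (Finset.mem_filter.mp hi₀).1
      have ha'a : a' < a := by rw [← hvi₀]; exact (Finset.mem_filter.mp hi₀).2
      have hsub : S ⊆ T.filter (fun i => v i ≤ a') := by
        intro i hi
        rw [Finset.mem_filter]
        exact ⟨(Finset.mem_filter.mp hi).1, Finset.le_max' _ _ (Finset.mem_image_of_mem v hi)⟩
      have ha'Va : a' ∈ Va := by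
        refine Finset.mem_filter.mpr ⟨by rw [← hvi₀]; exact Finset.mem_image_of_mem v hi₀T,
          le_trans h (Finset.card_le_card hsub)⟩
      exact absurd (Va.min'_le _ ha'Va) (not_le.mpr ha'a)
    have h1 : (T.filter (fun i => v i < a)).card ≤ k - 1 := Nat.le_sub_one_of_lt hlt
    have h2 : ((T.filter (fun i => v i < a)).card : ℝ) ≤ ((k - 1 : ℕ) : ℝ) := by
      exact_mod_cast h1
    rwa [Nat.cast_sub hk1, Nat.cast_one] at h2
  -- define b
  set Vb := (T.image v).filter (fun t => k ≤ (T.filter (fun i => t ≤ v i)).card) with hVb_def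
  have hVbne : Vb.Nonempty := by
    refine ⟨(T.image v).min' (hTne.image v), ?_⟩
    refine Finset.mem_filter.mpr ⟨(T.image v).min'_mem _, ?_⟩
    have : T.filter (fun i => (T.image v).min' (hTne.image v) ≤ v i) = T := by
      apply Finset.filter_true_of_mem
      intro i hi
      exact Finset.min'_le _ _ (Finset.mem_image_of_mem v hi)
    rw [this]; exact hkT
  set b := Vb.max' hVbne with hb_def
  have hb_mem : k ≤ (T.filter (fun i => b ≤ v i)).card :=
    (Finset.mem_filter.mp (Vb.max'_mem hVbne)).2
  have hb_lt : ((T.filter (fun i => b < v i)).card : ℝ) ≤ (k:ℝ) - 1 := by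
    have hlt : (T.filter (fun i => b < v i)).card < k := by
      by_contra h
      push_neg at h
      set S := T.filter (fun i => b < v i) with hS_def
      have hSne : S.Nonempty := Finset.card_pos.mp (lt_of_lt_of_le hk1 h)
      obtain ⟨i₀, hi₀, hvi₀⟩ := Finset.mem_image.mp ((S.image v).min'_mem (hSne.image v))
      set b' := (S.image v).min' (hSne.image v) with hb'_def
      have hi₀T : i₀ ∈ T := (Finset.mem_filter.mp hi₀).1
      have hb'b : b < b' := by rw [← hvi₀]; exact (Finset.mem_filter.mp hi₀).2
      have hsub : S ⊆ T.filter (fun i => b' ≤ v i) := by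
        intro i hi
        rw [Finset.mem_filter]
        exact ⟨(Finset.mem_filter.mp hi).1, Finset.min'_le _ _ (Finset.mem_image_of_mem v hi)⟩
      have hb'Vb : b' ∈ Vb := by
        refine Finset.mem_filter.mpr ⟨by rw [← hvi₀]; exact Finset.mem_image_of_mem v hi₀T,
          le_trans h (Finset.card_le_card hsub)⟩
      exact absurd (Vb.le_max' _ hb'Vb) (not_le.mpr hb'b)
    have h1 : (T.filter (fun i => b < v i)).card ≤ k - 1 := Nat.le_sub_one_of_lt hlt
    have h2 : ((T.filter (fun i => b < v i)).card : ℝ) ≤ ((k - 1 : ℕ) : ℝ) := by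
      exact_mod_cast h1
    rwa [Nat.cast_sub hk1, Nat.cast_one] at h2
  set g : ℝ := ρ / Real.sqrt (2 * n) with hg_def
  set r : ℝ := ρ / Real.sqrt n with hr_def
  have hg0 : 0 < g := by
    rw [hg_def]
    have h2n : (0:ℝ) < 2 * n := by linarith
    positivity
  have hgr : g ≤ r := by
    rw [hg_def, hr_def]
    apply div_le_div_of_nonneg_left hρ0.le
    · exact Real.sqrt_pos.mpr (by linarith)
    · exact Real.sqrt_le_sqrt (by linarith)
  by_cases hcase : b - a < g
  · exfalso
    set lam := (a + b) / 2 with hlam_def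
    have hsub : T ⊆ (T.filter (fun i => v i < a)) ∪ (T.filter (fun i => b < v i)) ∪
        ((Finset.univ : Finset (Fin n)).filter (fun i => |v i - lam| ≤ ρ / Real.sqrt n)) := by
      intro i hi
      rw [Finset.mem_union, Finset.mem_union]
      by_cases h1 : v i < a
      · exact Or.inl (Or.inl (Finset.mem_filter.mpr ⟨hi, h1⟩))
      by_cases h2 : b < v i
      · exact Or.inl (Or.inr (Finset.mem_filter.mpr ⟨hi, h2⟩))
      push_neg at h1 h2
      refine Or.inr (Finset.mem_filter.mpr ⟨Finset.mem_univ _, ?_⟩)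
      rw [abs_le, ← hr_def]
      constructor <;> linarith
    have hcards : (T.card : ℝ) ≤ ((T.filter (fun i => v i < a)).card : ℝ)
        + ((T.filter (fun i => b < v i)).card : ℝ)
        + ((((Finset.univ : Finset (Fin n)).filter
            (fun i => |v i - lam| ≤ ρ / Real.sqrt n)).card : ℝ)) := by
      have h1 := Finset.card_le_card hsub
      have h2 := Finset.card_union_le
        ((T.filter (fun i => v i < a)) ∪ (T.filter (fun i => b < v i)))
        ((Finset.univ : Finset (Fin n)).filter (fun i => |v i - lam| ≤ ρ / Real.sqrt n))
      have h3 := Finset.card_union_le (T.filter (fun i => v i < a))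
        (T.filter (fun i => b < v i))
      have h4 := h1.trans (h2.trans (Nat.add_le_add_right h3 _))
      exact_mod_cast h4
    have hl := hnc lam
    linarith
  · push_neg at hcase
    refine ⟨T.filter (fun i => v i ≤ a), T.filter (fun i => b ≤ v i), ?_, ?_, ?_, ?_⟩
    · rw [Finset.disjoint_filter]
      intro i _ hia hbi
      linarith
    · calc δ * n / 8 ≤ (k:ℝ) := hk_le
        _ ≤ _ := by exact_mod_cast ha_mem
    · calc δ * n / 8 ≤ (k:ℝ) := hk_le
        _ ≤ _ := by exact_mod_cast hb_mem
    · intro i hi j hj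
      rw [Finset.mem_filter] at hi hj
      have hiT := hi.1
      have hjT := hj.1
      rw [hT_def, Finset.mem_filter] at hiT hjT
      have hia : v i ≤ a := hi.2
      have hbj : b ≤ v j := hj.2
      constructor
      · calc g ≤ v j - v i := by linarith
          _ ≤ |v i - v j| := by rw [abs_sub_comm]; exact le_abs_self _
      · have h1 : |v i - v j| ≤ |v i| + |v j| := abs_sub _ _
        have h2 : |v i| + |v j| ≤ 2 * c := by linarith [hiT.2, hjT.2]
        have h3 : 2 * c ≤ 6 / Real.sqrt (δ * n) := by
          rw [hc_def, show (2:ℝ) * (2 / Real.sqrt (δ * ↑n)) = 4 / Real.sqrt (δ * ↑n) by ring]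
          gcongr
          norm_num
        linarith
end

section
/- Let X be a real random variable and let ε₀ ∈ (0,1), B ≥ 1. Suppose X₁,...,X_m are independent random variables each satisfying P(|Xᵢ| ≤ ε) ≤ Bε for all ε ≥ ε₀. Then there is an absolute constant C > 0 such that for every ε ≥ ε₀, P(‖(X₁,...,X_m)‖ ≤ ε√m) ≤ (CBε)^m, where ‖·‖ is the Euclidean norm on ℝ^m. -/
open MeasureTheory ProbabilityTheory
open scoped ENNReal

-- product of lintegrals for independent ENNReal-valued functions
lemma lintegral_prod_of_indep {Ω : Type} [MeasurableSpace Ω] {μ : Measure Ω}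
    [IsProbabilityMeasure μ] {m : ℕ} (Y : Fin m → Ω → ℝ≥0∞)
    (hY : ∀ i, Measurable (Y i))
    (hInd : iIndepFun Y μ) (s : Finset (Fin m)) :
    ∫⁻ ω, ∏ i ∈ s, Y i ω ∂μ = ∏ i ∈ s, ∫⁻ ω, Y i ω ∂μ := by
  classical
  induction s using Finset.induction_on with
  | empty => simp
  | insert i s hi ih =>
    have hindep : IndepFun (∏ j ∈ s, Y j) (Y i) μ :=
      hInd.indepFun_finsetProd_of_notMem hY hi
    have hmeas : Measurable (∏ j ∈ s, Y j) := by
      rw [Finset.prod_fn]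
      exact Finset.measurable_prod s (fun j _ => hY j)
    calc ∫⁻ ω, ∏ j ∈ insert i s, Y j ω ∂μ
        = ∫⁻ ω, ((∏ j ∈ s, Y j) * Y i) ω ∂μ := by
          congr 1; funext ω
          simp [Finset.prod_insert hi, mul_comm, Finset.prod_apply]
      _ = (∫⁻ ω, (∏ j ∈ s, Y j) ω ∂μ) * ∫⁻ ω, Y i ω ∂μ :=
          lintegral_mul_eq_lintegral_mul_lintegral_of_indepFun hmeas (hY i) hindep
      _ = ∏ j ∈ insert i s, ∫⁻ ω, Y j ω ∂μ := by
          rw [Finset.prod_insert hi, ← ih, mul_comm]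
          congr 1; · exact (lintegral_congr fun ω => by simp [Finset.prod_apply])

lemma pointwise_bound (x ε : ℝ) (hε : 0 < ε) :
    ENNReal.ofReal (Real.exp (-(x ^ 2 / ε ^ 2))) ≤
      ∑' k : ℕ, Set.indicator {y : ℝ | |y| ≤ ε * Real.sqrt (k + 1)}
        (fun _ => ENNReal.ofReal (Real.exp (-(k : ℝ)))) x := by
  set t : ℝ := x ^ 2 / ε ^ 2 with ht
  have ht0 : 0 ≤ t := div_nonneg (sq_nonneg x) (sq_nonneg ε)
  set k₀ : ℕ := ⌊t⌋₊ with hk₀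
  have hmem : x ∈ {y : ℝ | |y| ≤ ε * Real.sqrt (k₀ + 1)} := by
    have h1 : t < k₀ + 1 := Nat.lt_floor_add_one t
    have hx2 : x ^ 2 ≤ ε ^ 2 * (k₀ + 1) := by
      have := (div_lt_iff₀ (by positivity : (0:ℝ) < ε ^ 2)).mp h1
      nlinarith
    have : |x| = Real.sqrt (x ^ 2) := (Real.sqrt_sq_eq_abs x).symm
    rw [Set.mem_setOf_eq, this]
    calc Real.sqrt (x ^ 2) ≤ Real.sqrt (ε ^ 2 * (k₀ + 1)) := Real.sqrt_le_sqrt hx2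
      _ = ε * Real.sqrt (k₀ + 1) := by
          rw [Real.sqrt_mul (sq_nonneg ε), Real.sqrt_sq hε.le]
  calc ENNReal.ofReal (Real.exp (-t))
      ≤ Set.indicator {y : ℝ | |y| ≤ ε * Real.sqrt (k₀ + 1)}
          (fun _ => ENNReal.ofReal (Real.exp (-(k₀ : ℝ)))) x := by
        rw [Set.indicator_of_mem hmem]
        exact ENNReal.ofReal_le_ofReal (Real.exp_le_exp.mpr (by
          have := Nat.floor_le ht0; simp only [hk₀] at *; linarith))
    _ ≤ _ := ENNReal.le_tsum k₀

lemma coord_bound {Ω : Type} [MeasurableSpace Ω] (μ : Measure Ω) [IsProbabilityMeasure μ]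
    (X : Ω → ℝ) (hX : Measurable X) (ε₀ B ε : ℝ) (hε₀ : 0 < ε₀) (hB : 1 ≤ B)
    (h : ∀ ε' ≥ ε₀, μ {ω | |X ω| ≤ ε'} ≤ ENNReal.ofReal (B * ε')) (hε : ε₀ ≤ ε) :
    ∫⁻ ω, ENNReal.ofReal (Real.exp (-((X ω) ^ 2 / ε ^ 2))) ∂μ ≤
      ENNReal.ofReal (3 * (B * ε)) := by
  have hεpos : 0 < ε := lt_of_lt_of_le hε₀ hε
  have key : ∀ k : ℕ,
      μ {ω | |X ω| ≤ ε * Real.sqrt (k + 1)} ≤ ENNReal.ofReal (B * (ε * Real.sqrt (k + 1))) := by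
    intro k
    apply h
    have h1 : (1:ℝ) ≤ Real.sqrt (k + 1) := by
      rw [show (1:ℝ) = Real.sqrt 1 by simp]
      apply Real.sqrt_le_sqrt
      simp
    nlinarith
  have hSmeas : ∀ r : ℝ, MeasurableSet {ω | |X ω| ≤ r} :=
    fun r => measurableSet_le hX.abs measurable_const
  calc ∫⁻ ω, ENNReal.ofReal (Real.exp (-((X ω) ^ 2 / ε ^ 2))) ∂μ
      ≤ ∫⁻ ω, ∑' k : ℕ, Set.indicator {y : ℝ | |y| ≤ ε * Real.sqrt (k + 1)}
          (fun _ => ENNReal.ofReal (Real.exp (-(k : ℝ)))) (X ω) ∂μ :=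
        lintegral_mono fun ω => pointwise_bound (X ω) ε hεpos
    _ = ∑' k : ℕ, ∫⁻ ω, Set.indicator {y : ℝ | |y| ≤ ε * Real.sqrt (k + 1)}
          (fun _ => ENNReal.ofReal (Real.exp (-(k : ℝ)))) (X ω) ∂μ := by
        rw [lintegral_tsum]
        intro k
        exact ((measurable_const.indicator
          (measurableSet_le continuous_abs.measurable measurable_const)).comp hX).aemeasurable
    _ ≤ ∑' k : ℕ, ENNReal.ofReal (B * ε) * (ENNReal.ofReal (Real.exp (-(1/2 : ℝ)))) ^ k := by
        apply ENNReal.tsum_le_tsum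
        intro k
        have h1 : ∫⁻ ω, Set.indicator {y : ℝ | |y| ≤ ε * Real.sqrt (k + 1)}
            (fun _ => ENNReal.ofReal (Real.exp (-(k : ℝ)))) (X ω) ∂μ =
            ∫⁻ ω, Set.indicator {ω' | |X ω'| ≤ ε * Real.sqrt (k + 1)}
            (fun _ => ENNReal.ofReal (Real.exp (-(k : ℝ)))) ω ∂μ :=
          lintegral_congr fun ω => by
            by_cases hω : |X ω| ≤ ε * Real.sqrt (k + 1) <;> simp [Set.indicator, hω]
        rw [h1, lintegral_indicator_const (hSmeas _)]
        calc ENNReal.ofReal (Real.exp (-(k : ℝ))) * μ {ω | |X ω| ≤ ε * Real.sqrt (k + 1)}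
            ≤ ENNReal.ofReal (Real.exp (-(k : ℝ))) *
              ENNReal.ofReal (B * (ε * Real.sqrt (k + 1))) :=
              mul_le_mul_right (key k) _
          _ = ENNReal.ofReal (Real.exp (-(k : ℝ)) * (B * (ε * Real.sqrt (k + 1)))) := by
              rw [← ENNReal.ofReal_mul (Real.exp_nonneg _)]
          _ ≤ ENNReal.ofReal (B * ε) * (ENNReal.ofReal (Real.exp (-(1/2 : ℝ)))) ^ k := by
              rw [← ENNReal.ofReal_pow (Real.exp_nonneg _),
                ← ENNReal.ofReal_mul (by positivity)]
              apply ENNReal.ofReal_le_ofReal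
              rw [← Real.exp_nat_mul]
              have hek : Real.exp ((k:ℝ)) = (Real.exp ((k:ℝ)/2))^2 := by
                rw [sq, ← Real.exp_add]; norm_num
              have hsq : Real.sqrt (k + 1) ≤ Real.exp ((k : ℝ) / 2) := by
                have h2 : Real.sqrt (Real.exp (k:ℝ)) = Real.exp ((k:ℝ)/2) := by
                  rw [hek, Real.sqrt_sq (Real.exp_nonneg _)]
                rw [← h2]
                apply Real.sqrt_le_sqrt
                have := Real.add_one_le_exp (k : ℝ)
                linarith
              have hexp : Real.exp (-(k:ℝ)) * Real.sqrt (k+1) ≤ Real.exp ((k:ℝ) * -(1/2)) := by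
                rw [show (k:ℝ) * -(1/2) = -(k:ℝ) + (k:ℝ)/2 by ring, Real.exp_add]
                exact mul_le_mul_of_nonneg_left hsq (Real.exp_nonneg _)
              nlinarith [Real.exp_nonneg (-(k:ℝ)), Real.sqrt_nonneg ((k:ℝ)+1),
                Real.exp_nonneg ((k:ℝ) * -(1/2)), mul_le_mul_of_nonneg_left hexp
                  (by positivity : (0:ℝ) ≤ B * ε)]
    _ = ENNReal.ofReal (B * ε) * (1 - ENNReal.ofReal (Real.exp (-(1/2 : ℝ))))⁻¹ := by
        rw [ENNReal.tsum_mul_left, ENNReal.tsum_geometric]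
    _ ≤ ENNReal.ofReal (B * ε) * 3 := by
        apply mul_le_mul_right
        have hr : ENNReal.ofReal (Real.exp (-(1/2:ℝ))) ≤ ENNReal.ofReal (2/3) := by
          apply ENNReal.ofReal_le_ofReal
          have h32 : (3/2:ℝ) ≤ Real.exp (1/2) := by
            have := Real.add_one_le_exp (1/2 : ℝ); linarith
          rw [Real.exp_neg]
          calc (Real.exp (1/2:ℝ))⁻¹ ≤ (3/2:ℝ)⁻¹ :=
                inv_anti₀ (by norm_num) h32
            _ = 2/3 := by norm_num
        calc (1 - ENNReal.ofReal (Real.exp (-(1/2 : ℝ))))⁻¹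
            ≤ (1 - ENNReal.ofReal (2/3))⁻¹ :=
              ENNReal.inv_le_inv' (tsub_le_tsub_left hr 1)
          _ = 3 := by
              rw [show (1:ℝ≥0∞) = ENNReal.ofReal 1 by simp,
                ← ENNReal.ofReal_sub 1 (by norm_num : (0:ℝ) ≤ 2/3),
                ← ENNReal.ofReal_inv_of_pos (by norm_num)]
              norm_num
    _ = ENNReal.ofReal (3 * (B * ε)) := by
        rw [show (3:ℝ≥0∞) = ENNReal.ofReal 3 by norm_num,
          ← ENNReal.ofReal_mul (by positivity), mul_comm]

/-- Tensorization lemma (Rudelson–Vershynin): if each `Xᵢ` satisfies the small-ball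
bound `P(|Xᵢ| ≤ ε) ≤ Bε` for `ε ≥ ε₀`, and the `Xᵢ` are independent, then
`P(‖(X₁,…,X_m)‖ ≤ ε√m) ≤ (CBε)^m` for `ε ≥ ε₀`, with an absolute constant `C`. -/
theorem stmt_3 :
    ∃ C : ℝ, 0 < C ∧
      ∀ {Ω : Type} [MeasurableSpace Ω] (μ : Measure Ω), IsProbabilityMeasure μ →
      ∀ (m : ℕ) (X : Fin m → Ω → ℝ) (ε₀ B : ℝ),
        ε₀ ∈ Set.Ioo (0:ℝ) 1 → 1 ≤ B →
        (∀ i, Measurable (X i)) →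
        iIndepFun X μ →
        (∀ i, ∀ ε ≥ ε₀, μ {ω | |X i ω| ≤ ε} ≤ ENNReal.ofReal (B * ε)) →
        ∀ ε ≥ ε₀,
          μ {ω | Real.sqrt (∑ i, (X i ω)^2) ≤ ε * Real.sqrt m}
            ≤ ENNReal.ofReal ((C * B * ε)^m) := by
  refine ⟨3 * Real.exp 1, by positivity, ?_⟩
  intro Ω _ μ hμ m X ε₀ B hε₀ hB hXmeas hIndep hsmall ε hε
  haveI := hμ
  obtain ⟨hε₀pos, -⟩ := hε₀
  have hεpos : 0 < ε := lt_of_lt_of_le hε₀pos hε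
  set g : ℝ → ℝ≥0∞ := fun x => ENNReal.ofReal (Real.exp (-(x ^ 2 / ε ^ 2))) with hg
  have hgmeas : Measurable g := by
    apply ENNReal.measurable_ofReal.comp
    apply Real.measurable_exp.comp
    exact (((measurable_id.pow_const 2).div_const _).neg)
  set Y : Fin m → Ω → ℝ≥0∞ := fun i => g ∘ X i with hY
  have hYmeas : ∀ i, Measurable (Y i) := fun i => hgmeas.comp (hXmeas i)
  have hYind : iIndepFun Y μ :=
    hIndep.comp (fun _ => g) (fun _ => hgmeas)
  have ha0 : ENNReal.ofReal (Real.exp (-(m:ℝ))) ≠ 0 :=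
    (ENNReal.ofReal_pos.mpr (Real.exp_pos _)).ne'
  have hatop : ENNReal.ofReal (Real.exp (-(m:ℝ))) ≠ ⊤ := ENNReal.ofReal_ne_top
  have hsub : {ω | Real.sqrt (∑ i, (X i ω)^2) ≤ ε * Real.sqrt m} ⊆
      {ω | ENNReal.ofReal (Real.exp (-(m:ℝ))) ≤ ∏ i, Y i ω} := by
    intro ω hω
    simp only [Set.mem_setOf_eq] at hω ⊢
    have hsum0 : 0 ≤ ∑ i, (X i ω)^2 := Finset.sum_nonneg fun i _ => sq_nonneg _
    have hsum : ∑ i, (X i ω)^2 ≤ ε^2 * m := by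
      have h2 := mul_self_le_mul_self (Real.sqrt_nonneg _) hω
      rw [Real.mul_self_sqrt hsum0] at h2
      calc ∑ i, (X i ω)^2 ≤ (ε * Real.sqrt m) * (ε * Real.sqrt m) := h2
        _ = ε^2 * (Real.sqrt m * Real.sqrt m) := by ring
        _ = ε^2 * m := by rw [Real.mul_self_sqrt (Nat.cast_nonneg m)]
    have hprod : ∏ i, Y i ω =
        ENNReal.ofReal (Real.exp (-((∑ i, (X i ω)^2) / ε^2))) := by
      simp only [hY, hg, Function.comp_apply]
      rw [← ENNReal.ofReal_prod_of_nonneg (fun i _ => Real.exp_nonneg _), ← Real.exp_sum]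
      congr 2
      rw [Finset.sum_neg_distrib, ← Finset.sum_div]
    rw [hprod]
    apply ENNReal.ofReal_le_ofReal
    apply Real.exp_le_exp.mpr
    rw [neg_le_neg_iff]
    rw [div_le_iff₀ (by positivity : (0:ℝ) < ε^2)]
    linarith [hsum]
  have hprodmeas : Measurable (fun ω => ∏ i, Y i ω) :=
    Finset.measurable_prod Finset.univ (fun i _ => hYmeas i)
  calc μ {ω | Real.sqrt (∑ i, (X i ω)^2) ≤ ε * Real.sqrt m}
      ≤ μ {ω | ENNReal.ofReal (Real.exp (-(m:ℝ))) ≤ ∏ i, Y i ω} := measure_mono hsub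
    _ ≤ (∫⁻ ω, ∏ i, Y i ω ∂μ) / ENNReal.ofReal (Real.exp (-(m:ℝ))) :=
        meas_ge_le_lintegral_div hprodmeas.aemeasurable ha0 hatop
    _ ≤ (ENNReal.ofReal (3 * (B * ε)))^m / ENNReal.ofReal (Real.exp (-(m:ℝ))) := by
        apply ENNReal.div_le_div_right
        rw [lintegral_prod_of_indep Y hYmeas hYind Finset.univ]
        calc ∏ i, ∫⁻ ω, Y i ω ∂μ
            ≤ ∏ _i : Fin m, ENNReal.ofReal (3 * (B * ε)) := by
              apply Finset.prod_le_prod'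
              intro i _
              exact coord_bound μ (X i) (hXmeas i) ε₀ B ε hε₀pos hB (hsmall i) hε
          _ = (ENNReal.ofReal (3 * (B * ε)))^m := by
              rw [Finset.prod_const, Finset.card_fin]
    _ = ENNReal.ofReal ((3 * Real.exp 1 * B * ε)^m) := by
        rw [div_eq_mul_inv, ← ENNReal.ofReal_inv_of_pos (Real.exp_pos _),
          ← ENNReal.ofReal_pow (by positivity), ← ENNReal.ofReal_mul (by positivity)]
        congr 1
        rw [← Real.exp_neg, neg_neg,
          show Real.exp (m:ℝ) = Real.exp 1 ^ m by rw [← Real.exp_nat_mul]; norm_num,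
          ← mul_pow]
        ring_nf
end

section
/- Let α > 0 and γ ∈ (0,1). Define CLCD_{α,γ}(v) := inf{θ > 0 : dist(θ·D(v), ℤ^{C(n,2)}) < min(γ‖θ·D(v)‖, α)}. Let v, w ∈ ℝⁿ with ‖v − w‖ < γ‖D(v)‖/(5√n). Then CLCD_{α/2, γ/2}(w) ≥ min{CLCD_{α,γ}(v), α/(4√n·‖v − w‖)}. -/
open scoped ENNReal

/-- Euclidean norm of `D(x)`, the vector of pairwise differences `xᵢ - xⱼ`, `i < j`. -/
noncomputable def Dnorm (n : ℕ) (x : Fin n → ℝ) : ℝ :=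
  Real.sqrt (∑ i : Fin n, ∑ j : Fin n, if i < j then (x i - x j)^2 else 0)

/-- Euclidean distance from `θ · D(x)` to the integer lattice `ℤ^{C(n,2)}`. -/
noncomputable def DlatticeDist (n : ℕ) (θ : ℝ) (x : Fin n → ℝ) : ℝ :=
  sInf {d : ℝ | ∃ p : Fin n → Fin n → ℤ,
    d = Real.sqrt (∑ i : Fin n, ∑ j : Fin n,
        if i < j then (θ * (x i - x j) - (p i j : ℝ))^2 else 0)}

/-- The Combinatorial Least Common Denominator
`CLCD_{α,γ}(v) = inf{θ > 0 : dist(θ·D(v), ℤ^{C(n,2)}) < min(γ‖θ·D(v)‖, α)}`,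
valued in `ℝ≥0∞` (the infimum of the empty set being `∞`). -/
noncomputable def CLCD (n : ℕ) (α γ : ℝ) (v : Fin n → ℝ) : ℝ≥0∞ :=
  ⨅ θ ∈ {θ : ℝ | 0 < θ ∧
      DlatticeDist n θ v < min (γ * (θ * Dnorm n v)) α}, ENNReal.ofReal θ

/-- Euclidean norm on `ℝⁿ`. -/
noncomputable def enorm' {n : ℕ} (x : Fin n → ℝ) : ℝ := Real.sqrt (∑ i, (x i)^2)

/- ### Auxiliary machinery -/

noncomputable def toE (n : ℕ) (f : Fin n → Fin n → ℝ) : EuclideanSpace ℝ (Fin n × Fin n) :=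
  WithLp.toLp 2 (fun p : Fin n × Fin n => if p.1 < p.2 then f p.1 p.2 else 0)

lemma norm_toE (n : ℕ) (f : Fin n → Fin n → ℝ) :
    ‖toE n f‖ = Real.sqrt (∑ i : Fin n, ∑ j : Fin n, if i < j then (f i j)^2 else 0) := by
  rw [EuclideanSpace.norm_eq]
  congr 1
  rw [Fintype.sum_prod_type]
  refine Finset.sum_congr rfl fun i _ => Finset.sum_congr rfl fun j _ => ?_
  by_cases h : i < j <;> simp [toE, h, sq_abs]

lemma toE_add (n : ℕ) (f g : Fin n → Fin n → ℝ) :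
    toE n (fun i j => f i j + g i j) = toE n f + toE n g := by
  ext p
  by_cases h : p.1 < p.2 <;> simp [toE, h]

lemma toE_smul (n : ℕ) (c : ℝ) (f : Fin n → Fin n → ℝ) :
    toE n (fun i j => c * f i j) = c • toE n f := by
  ext p
  by_cases h : p.1 < p.2 <;> simp [toE, h]

lemma Dnorm_eq (n : ℕ) (x : Fin n → ℝ) :
    Dnorm n x = ‖toE n (fun i j => x i - x j)‖ := (norm_toE n _).symm

lemma sum_pairs_le (n : ℕ) (x : Fin n → ℝ) :
    (∑ i : Fin n, ∑ j : Fin n, if i < j then (x i - x j)^2 else 0) ≤ n * ∑ i, (x i)^2 := by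
  have hswap : (∑ i : Fin n, ∑ j : Fin n, if i < j then (x i - x j)^2 else 0)
      = ∑ i : Fin n, ∑ j : Fin n, if j < i then (x i - x j)^2 else 0 := by
    rw [Finset.sum_comm]
    exact Finset.sum_congr rfl fun i _ => Finset.sum_congr rfl fun j _ => by
      by_cases h : j < i <;> simp [h]
      ring
  have hsplit : ∀ i j : Fin n, (x i - x j)^2 =
      (if i < j then (x i - x j)^2 else 0) + (if j < i then (x i - x j)^2 else 0) := by
    intro i j
    rcases lt_trichotomy i j with h|h|h
    · simp [h, asymm h]
    · simp [h]
    · simp [h, asymm h]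
  have hfull : (∑ i : Fin n, ∑ j : Fin n, (x i - x j)^2)
      = 2 * (∑ i : Fin n, ∑ j : Fin n, if i < j then (x i - x j)^2 else 0) := by
    calc (∑ i : Fin n, ∑ j : Fin n, (x i - x j)^2)
        = ∑ i : Fin n, ∑ j : Fin n, ((if i < j then (x i - x j)^2 else 0)
            + (if j < i then (x i - x j)^2 else 0)) := by
          refine Finset.sum_congr rfl fun i _ => Finset.sum_congr rfl fun j _ => hsplit i j
      _ = (∑ i : Fin n, ∑ j : Fin n, if i < j then (x i - x j)^2 else 0)
            + ∑ i : Fin n, ∑ j : Fin n, if j < i then (x i - x j)^2 else 0 := by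
          simp [Finset.sum_add_distrib]
      _ = _ := by rw [← hswap]; ring
  have hexp : (∑ i : Fin n, ∑ j : Fin n, (x i - x j)^2)
      = 2 * ((n : ℝ) * ∑ i, (x i)^2) - 2 * (∑ i, x i)^2 := by
    have : ∀ i j : Fin n, (x i - x j)^2 = (x i)^2 - 2 * (x i * x j) + (x j)^2 := by
      intro i j; ring
    simp only [this, Finset.sum_add_distrib, Finset.sum_sub_distrib, ← Finset.mul_sum,
      Finset.sum_const, Finset.card_univ, Fintype.card_fin, nsmul_eq_mul, ← Finset.sum_mul]
    ring_nf
  nlinarith [sq_nonneg (∑ i, x i), hfull, hexp]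

lemma Dnorm_le_sqrt_mul (n : ℕ) (x : Fin n → ℝ) :
    Dnorm n x ≤ Real.sqrt n * enorm' x := by
  rw [Dnorm, enorm', ← Real.sqrt_mul (by positivity : (0:ℝ) ≤ (n:ℝ))]
  exact Real.sqrt_le_sqrt (sum_pairs_le n x)

lemma DSet_nonempty (n : ℕ) (θ : ℝ) (x : Fin n → ℝ) :
    {d : ℝ | ∃ p : Fin n → Fin n → ℤ,
      d = Real.sqrt (∑ i : Fin n, ∑ j : Fin n,
        if i < j then (θ * (x i - x j) - (p i j : ℝ))^2 else 0)}.Nonempty :=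
  ⟨_, ⟨(0 : Fin n → Fin n → ℤ), rfl⟩⟩

lemma DSet_bddBelow (n : ℕ) (θ : ℝ) (x : Fin n → ℝ) :
    BddBelow {d : ℝ | ∃ p : Fin n → Fin n → ℤ,
      d = Real.sqrt (∑ i : Fin n, ∑ j : Fin n,
        if i < j then (θ * (x i - x j) - (p i j : ℝ))^2 else 0)} :=
  ⟨0, by rintro d ⟨p, rfl⟩; exact Real.sqrt_nonneg _⟩

lemma DlatticeDist_le (n : ℕ) (θ : ℝ) (x : Fin n → ℝ) (p : Fin n → Fin n → ℤ) :
    DlatticeDist n θ x ≤ ‖toE n (fun i j => θ * (x i - x j) - (p i j : ℝ))‖ := by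
  rw [norm_toE]
  exact csInf_le (DSet_bddBelow n θ x) ⟨p, rfl⟩

lemma exists_of_DlatticeDist_lt {n : ℕ} {θ b : ℝ} {x : Fin n → ℝ}
    (h : DlatticeDist n θ x < b) :
    ∃ p : Fin n → Fin n → ℤ, ‖toE n (fun i j => θ * (x i - x j) - (p i j : ℝ))‖ < b := by
  obtain ⟨d, ⟨p, rfl⟩, hd⟩ := exists_lt_of_csInf_lt (DSet_nonempty n θ x) h
  exact ⟨p, by rwa [norm_toE]⟩

theorem stmt_6 (n : ℕ) (α γ : ℝ) (hα : 0 < α) (hγ : γ ∈ Set.Ioo (0:ℝ) 1)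
    (v w : Fin n → ℝ)
    (hvw : enorm' (v - w) < γ * Dnorm n v / (5 * Real.sqrt n)) :
    min (CLCD n α γ v) (ENNReal.ofReal (α / (4 * Real.sqrt n * enorm' (v - w))))
      ≤ CLCD n (α/2) (γ/2) w := by
  obtain ⟨hγ0, hγ1⟩ := hγ
  set s := Real.sqrt n with hs
  set ε := enorm' (v - w) with hε
  set D := Dnorm n v with hD
  set E := Dnorm n w with hE
  set δ := Dnorm n (v - w) with hδdef
  have hε0 : 0 ≤ ε := Real.sqrt_nonneg _
  have hD0 : 0 ≤ D := Real.sqrt_nonneg _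
  have hδ0 : 0 ≤ δ := Real.sqrt_nonneg _
  have hs0 : 0 ≤ s := Real.sqrt_nonneg _
  have hδ : δ ≤ s * ε := Dnorm_le_sqrt_mul n (v - w)
  -- s > 0 and D > 0
  have hspos : 0 < s := by
    rcases hs0.lt_or_eq with h | h
    · exact h
    · exfalso; rw [← h] at hvw; simp at hvw; linarith
  have hsε : 5 * (s * ε) < γ * D := by
    have h5s : 0 < 5 * s := by linarith
    have := (lt_div_iff₀ h5s).mp hvw
    linarith
  have hDpos : 0 < D := by nlinarith
  -- E ≤ D + δ
  have hEle : E ≤ D + δ := by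
    have key : (fun i j => w i - w j)
        = fun (i j : Fin n) => (v i - v j) + (-((v - w) i - (v - w) j)) := by
      funext i j; simp [Pi.sub_apply]; ring
    have hneg : toE n (fun i j => -((v - w) i - (v - w) j))
        = -toE n (fun i j => (v - w) i - (v - w) j) := by
      ext p; by_cases h : p.1 < p.2 <;> simp [toE, h]
    rw [hE, hD, hδdef, Dnorm_eq, Dnorm_eq, Dnorm_eq, key, toE_add, hneg]
    calc ‖toE n (fun i j => v i - v j) + -toE n (fun i j => (v-w) i - (v-w) j)‖
        ≤ ‖toE n (fun i j => v i - v j)‖ + ‖-toE n (fun i j => (v-w) i - (v-w) j)‖ :=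
          norm_add_le _ _
      _ = _ := by rw [norm_neg]
  -- main part
  rw [CLCD]
  refine le_iInf₂ fun θ hθmem => ?_
  obtain ⟨hθpos, hθd⟩ := hθmem
  by_cases hcase : α / (4 * s * ε) ≤ θ
  · exact le_trans (min_le_right _ _) (ENNReal.ofReal_le_ofReal hcase)
  · push_neg at hcase
    refine le_trans (min_le_left _ _) ?_
    -- show θ is in the set for (α, γ, v)
    have hεpos : 0 < ε := by
      rcases hε0.lt_or_eq with h | h
      · exact h
      · exfalso; rw [← h] at hcase; simp at hcase; linarith
    have h4sε : 0 < 4 * s * ε := by positivity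
    have hθα : θ * (4 * s * ε) < α := (lt_div_iff₀ h4sε).mp hcase
    -- get a lattice point realizing the distance for w
    obtain ⟨p, hp⟩ := exists_of_DlatticeDist_lt hθd
    have hplt := lt_min_iff.mp hp
    -- triangle inequality
    have hkey : (fun i j => θ * (v i - v j) - (p i j : ℝ))
        = fun (i j : Fin n) => (θ * (w i - w j) - (p i j : ℝ))
            + θ * ((v - w) i - (v - w) j) := by
      funext i j; simp [Pi.sub_apply]; ring
    have hdv : DlatticeDist n θ v
        ≤ ‖toE n (fun i j => θ * (w i - w j) - (p i j : ℝ))‖ + θ * δ := by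
      refine le_trans (DlatticeDist_le n θ v p) ?_
      rw [hkey, toE_add, toE_smul]
      calc ‖toE n (fun i j => θ * (w i - w j) - (p i j : ℝ))
              + θ • toE n (fun i j => (v - w) i - (v - w) j)‖
          ≤ ‖toE n (fun i j => θ * (w i - w j) - (p i j : ℝ))‖
              + ‖θ • toE n (fun i j => (v - w) i - (v - w) j)‖ := norm_add_le _ _
        _ = _ := by
            rw [norm_smul, Real.norm_eq_abs, abs_of_pos hθpos, hδdef, Dnorm_eq]
    have hmem : θ ∈ {θ : ℝ | 0 < θ ∧
        DlatticeDist n θ v < min (γ * (θ * D)) α} := by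
      refine ⟨hθpos, lt_min_iff.mpr ⟨?_, ?_⟩⟩
      · -- γ θ D bound
        have h1 : θ * δ ≤ θ * (s * ε) :=
          mul_le_mul_of_nonneg_left hδ hθpos.le
        have h2 : θ * (5 * (s * ε)) < θ * (γ * D) :=
          mul_lt_mul_of_pos_left hsε hθpos
        have h3 : (γ/2) * (θ * E) ≤ (γ/2) * (θ * (D + δ)) := by
          have : θ * E ≤ θ * (D + δ) := mul_le_mul_of_nonneg_left hEle hθpos.le
          nlinarith
        have hB := hplt.1
        nlinarith [mul_nonneg hθpos.le hδ0, mul_nonneg hθpos.le (mul_nonneg hs0 hε0),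
          mul_pos hγ0 (mul_pos hθpos hDpos)]
      · -- α bound
        have h1 : θ * δ ≤ θ * (s * ε) :=
          mul_le_mul_of_nonneg_left hδ hθpos.le
        have hB := hplt.2
        linarith
    exact iInf₂_le θ hmem
end

section
/- Let δ, ρ ∈ (0,1), and let v ∈ 𝕊^{n−1} be non almost-constant with parameters (δ, ρ). Then for every α > 0 and every γ with 0 < γ < δρ/12, one has CLCD_{α,γ}(v) ≥ √(δn)/7. -/
open Finset
open scoped ENNReal

private lemma sq_le_sq_sub_int {x : ℝ} (hx : |x| ≤ 1/2) (m : ℤ) : x^2 ≤ (x - m)^2 := by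
  rcases eq_or_ne m 0 with rfl | hm
  · simp
  · have h1 : (1:ℝ) ≤ |(m:ℝ)| := by exact_mod_cast Int.one_le_abs hm
    have h2 : |(m:ℝ)| - |x| ≤ |x - m| := by
      have := abs_sub_abs_le_abs_sub (m:ℝ) x
      rwa [abs_sub_comm] at this
    nlinarith [abs_nonneg x, sq_abs x, sq_abs (x - (m:ℝ)), abs_nonneg (x - (m:ℝ))]

set_option maxHeartbeats 2000000 in
theorem stmt_7 (n : ℕ) (δ ρ : ℝ) (hδ : δ ∈ Set.Ioo (0:ℝ) 1) (hρ : ρ ∈ Set.Ioo (0:ℝ) 1)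
    (v : Fin n → ℝ) (hv : ∑ i, (v i)^2 = 1)
    (hnc : ∀ lam : ℝ,
      (((Finset.univ : Finset (Fin n)).filter
          (fun i => |v i - lam| ≤ ρ / Real.sqrt n)).card : ℝ) < (1 - δ) * n)
    (α γ : ℝ) (hα : 0 < α) (hγ0 : 0 < γ) (hγ : γ < δ * ρ / 12) :
    ENNReal.ofReal (Real.sqrt (δ * n) / 7) ≤ CLCD n α γ v := by
  obtain ⟨hδ0, hδ1⟩ := hδ
  obtain ⟨hρ0, hρ1⟩ := hρ
  rcases Nat.eq_zero_or_pos n with hn0 | hn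
  · subst hn0; simp at hv
  have hn' : (0:ℝ) < n := by exact_mod_cast hn
  have hδn : 0 < δ * n := mul_pos hδ0 hn'
  set c : ℝ := Real.sqrt (δ * n) with hcdef
  have hc0 : 0 < c := Real.sqrt_pos.2 hδn
  have hc2 : c^2 = δ * n := Real.sq_sqrt hδn.le
  -- the Dnorm bound
  have hDle : Dnorm n v ≤ 2 * Real.sqrt n := by
    have h1 : (∑ i : Fin n, ∑ j : Fin n, if i < j then (v i - v j)^2 else 0)
        ≤ ∑ i : Fin n, ∑ j : Fin n, (2*(v i)^2 + 2*(v j)^2) := by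
      refine Finset.sum_le_sum fun i _ => Finset.sum_le_sum fun j _ => ?_
      split_ifs
      · nlinarith [sq_nonneg (v i + v j)]
      · positivity
    have hinner : ∀ i : Fin n, (∑ j : Fin n, (2*(v i)^2 + 2*(v j)^2))
        = (n:ℝ) * (2*(v i)^2) + 2 := by
      intro i
      rw [Finset.sum_add_distrib, Finset.sum_const, ← Finset.mul_sum, hv]
      simp [mul_comm]
    have h2 : (∑ i : Fin n, ∑ j : Fin n, (2*(v i)^2 + 2*(v j)^2)) = 4 * (n:ℝ) := by
      calc (∑ i : Fin n, ∑ j : Fin n, (2*(v i)^2 + 2*(v j)^2))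
          = ∑ i : Fin n, ((n:ℝ) * (2*(v i)^2) + 2) := Finset.sum_congr rfl fun i _ => hinner i
        _ = 4 * (n:ℝ) := by
            rw [Finset.sum_add_distrib, Finset.sum_const]
            have h3 : (∑ i : Fin n, (n:ℝ) * (2*(v i)^2)) = (n:ℝ) * 2 := by
              rw [show (fun i => (n:ℝ) * (2*(v i)^2)) = fun i => ((n:ℝ)*2) * (v i)^2 by
                funext i; ring]
              rw [← Finset.mul_sum, hv, mul_one]
            rw [h3]
            simp
            ring
    have h3 : Real.sqrt (4 * (n:ℝ)) = 2 * Real.sqrt n := by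
      rw [show (4:ℝ) * n = (2 * Real.sqrt n)^2 by
        rw [mul_pow, Real.sq_sqrt hn'.le]; ring]
      exact Real.sqrt_sq (by positivity)
    calc Dnorm n v ≤ Real.sqrt (4 * (n:ℝ)) :=
          Real.sqrt_le_sqrt (le_of_le_of_eq h1 h2)
      _ = 2 * Real.sqrt n := h3
  -- the set S of big coordinates
  set t : ℝ := 7 / (4 * c) with htdef
  have ht0 : 0 < t := by positivity
  set S : Finset (Fin n) := univ.filter (fun i => t ≤ |v i|) with hSdef
  have hScard : (S.card : ℝ) ≤ 16 * (δ * n) / 49 := by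
    have h1 : (S.card : ℝ) * t^2 ≤ 1 := by
      calc (S.card : ℝ) * t^2 = ∑ _i ∈ S, t^2 := by
            rw [Finset.sum_const, nsmul_eq_mul]
        _ ≤ ∑ i ∈ S, (v i)^2 := by
            refine Finset.sum_le_sum fun i hi => ?_
            have h := (Finset.mem_filter.1 hi).2
            nlinarith [sq_abs (v i), abs_nonneg (v i)]
        _ ≤ ∑ i, (v i)^2 :=
            Finset.sum_le_sum_of_subset_of_nonneg (Finset.filter_subset _ _)
              (fun i _ _ => sq_nonneg _)
        _ = 1 := hv
    have ht2 : t^2 = 49 / (16 * (δ * n)) := by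
      rw [htdef, div_pow, mul_pow, hc2]; norm_num
    rw [ht2, ← mul_div_assoc, div_le_one (by positivity)] at h1
    linarith
  have hSccard : (33/49) * (n:ℝ) ≤ ((Sᶜ : Finset (Fin n)).card : ℝ) := by
    have h1 : Sᶜ.card = n - S.card := by
      rw [Finset.card_compl, Fintype.card_fin]
    have h2 : S.card ≤ n := by
      simpa using Finset.card_le_card (Finset.filter_subset _ (univ : Finset (Fin n)))
    have h3 : ((Sᶜ).card : ℝ) = (n:ℝ) - S.card := by
      rw [h1]; push_cast [h2]; ring
    rw [h3]
    nlinarith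
  have hmem : ∀ i ∈ Sᶜ, |v i| < t := by
    intro i hi
    by_contra h
    push_neg at h
    exact (Finset.mem_compl.1 hi) (Finset.mem_filter.2 ⟨Finset.mem_univ _, h⟩)
  -- per row lower bound over Sᶜ
  have hrow : ∀ i : Fin n, (33/49) * (δ * ρ^2) ≤ ∑ j ∈ Sᶜ, (v i - v j)^2 := by
    intro i
    have hGcard : δ * (n:ℝ) <
        ((univ.filter (fun j => ¬ |v j - v i| ≤ ρ / Real.sqrt n)).card : ℝ) := by
      have h := Finset.card_filter_add_card_filter_not
        (s := (univ : Finset (Fin n))) (p := fun j => |v j - v i| ≤ ρ / Real.sqrt n)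
      rw [Finset.card_univ, Fintype.card_fin] at h
      have h2 := hnc (v i)
      have h3 : ((univ.filter (fun j => |v j - v i| ≤ ρ / Real.sqrt n)).card : ℝ)
          + ((univ.filter (fun j => ¬ |v j - v i| ≤ ρ / Real.sqrt n)).card : ℝ) = (n:ℝ) := by
        exact_mod_cast congrArg (Nat.cast : ℕ → ℝ) h
      linarith
    set G := univ.filter (fun j => ¬ |v j - v i| ≤ ρ / Real.sqrt n) with hGdef
    have hsub : G ⊆ (G ∩ Sᶜ) ∪ S := by
      intro j hj
      by_cases h : j ∈ S
      · exact Finset.mem_union_right _ h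
      · exact Finset.mem_union_left _ (Finset.mem_inter.2 ⟨hj, Finset.mem_compl.2 h⟩)
    have hGS : (33/49) * (δ * n) < (((G ∩ Sᶜ)).card : ℝ) := by
      have h4 : (G.card : ℝ) ≤ ((G ∩ Sᶜ).card : ℝ) + (S.card : ℝ) := by
        have := (Finset.card_le_card hsub).trans (Finset.card_union_le _ _)
        exact_mod_cast this
      nlinarith
    have hterm : ∀ j ∈ G ∩ Sᶜ, ρ^2 / n ≤ (v i - v j)^2 := by
      intro j hj
      have hjG := Finset.mem_inter.1 hj |>.1
      have h := (Finset.mem_filter.1 hjG).2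
      push_neg at h
      have hρn : ρ^2 / (n:ℝ) = (ρ / Real.sqrt n)^2 := by
        rw [div_pow, Real.sq_sqrt hn'.le]
      rw [hρn]
      have h0 : 0 ≤ ρ / Real.sqrt n := by positivity
      nlinarith [sq_abs (v j - v i), abs_nonneg (v j - v i)]
    calc (33/49) * (δ * ρ^2) = ((33/49) * (δ * n)) * (ρ^2 / n) := by
          field_simp
      _ ≤ (((G ∩ Sᶜ)).card : ℝ) * (ρ^2 / n) :=
          mul_le_mul_of_nonneg_right hGS.le (by positivity)
      _ = ∑ _j ∈ G ∩ Sᶜ, (ρ^2 / n) := by rw [Finset.sum_const, nsmul_eq_mul]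
      _ ≤ ∑ j ∈ G ∩ Sᶜ, (v i - v j)^2 := Finset.sum_le_sum hterm
      _ ≤ ∑ j ∈ Sᶜ, (v i - v j)^2 :=
          Finset.sum_le_sum_of_subset_of_nonneg (Finset.inter_subset_right)
            (fun j _ _ => sq_nonneg _)
  -- main argument
  rw [CLCD]
  refine le_iInf fun θ => le_iInf fun hθ => ENNReal.ofReal_le_ofReal ?_
  obtain ⟨hθ0, hdist⟩ := hθ
  by_contra hcon
  push_neg at hcon
  rw [DlatticeDist] at hdist
  have hbdd : BddBelow {d : ℝ | ∃ p : Fin n → Fin n → ℤ,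
      d = Real.sqrt (∑ i : Fin n, ∑ j : Fin n,
        if i < j then (θ * (v i - v j) - (p i j : ℝ))^2 else 0)} :=
    ⟨0, by rintro d ⟨p, rfl⟩; exact Real.sqrt_nonneg _⟩
  have hne : {d : ℝ | ∃ p : Fin n → Fin n → ℤ,
      d = Real.sqrt (∑ i : Fin n, ∑ j : Fin n,
        if i < j then (θ * (v i - v j) - (p i j : ℝ))^2 else 0)}.Nonempty :=
    ⟨_, ⟨fun _ _ => 0, rfl⟩⟩
  obtain ⟨d, ⟨p, rfl⟩, hd⟩ := (csInf_lt_iff hbdd hne).1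
    (lt_of_lt_of_le hdist (min_le_left _ _))
  set Q : ℝ := ∑ i : Fin n, ∑ j : Fin n,
      if i < j then (θ * (v i - v j) - (p i j : ℝ))^2 else 0 with hQdef
  have hQ0 : 0 ≤ Q := by
    refine Finset.sum_nonneg fun i _ => Finset.sum_nonneg fun j _ => ?_
    split_ifs
    · exact sq_nonneg _
    · exact le_refl 0
  -- symmetrization and the key lower bound on Q
  set q : Fin n → Fin n → ℝ :=
    fun i j => if i < j then (θ * (v i - v j) - (p i j : ℝ))^2 else 0 with hqdef
  have hq_nonneg : ∀ i j, 0 ≤ q i j := by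
    intro i j
    by_cases h : i < j
    · simp only [hqdef, if_pos h]; exact sq_nonneg _
    · simp only [hqdef, if_neg h]; exact le_refl 0
  have h12 : θ * (2 * t) < 1/2 := by
    rw [htdef, show θ * (2 * (7 / (4 * c))) = 7 * θ / (2 * c) by ring,
      div_lt_div_iff₀ (by positivity) (by norm_num)]
    nlinarith
  have hpt : ∀ i j : Fin n,
      θ^2 * (if i ∈ Sᶜ ∧ j ∈ Sᶜ then (v i - v j)^2 else 0) ≤ q i j + q j i := by
    intro i j
    by_cases hij : i ∈ Sᶜ ∧ j ∈ Sᶜ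
    · rw [if_pos hij]
      have hvi := hmem i hij.1
      have hvj := hmem j hij.2
      have habs : |θ * (v i - v j)| ≤ 1/2 := by
        rw [abs_mul, abs_of_pos hθ0]
        calc θ * |v i - v j| ≤ θ * (|v i| + |v j|) :=
              mul_le_mul_of_nonneg_left (abs_sub (v i) (v j)) hθ0.le
          _ ≤ θ * (2 * t) := mul_le_mul_of_nonneg_left (by linarith) hθ0.le
          _ ≤ 1/2 := h12.le
      rcases lt_trichotomy i j with h | h | h
      · have hz : q j i = 0 := if_neg (asymm h)
        rw [hz, add_zero, hqdef]
        simp only [if_pos h]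
        calc θ^2 * (v i - v j)^2 = (θ * (v i - v j))^2 := by ring
          _ ≤ _ := sq_le_sq_sub_int habs (p i j)
      · subst h
        simp only [sub_self]
        have := add_nonneg (hq_nonneg i i) (hq_nonneg i i)
        simpa using this
      · have hz : q i j = 0 := if_neg (asymm h)
        rw [hz, zero_add, hqdef]
        simp only [if_pos h]
        have habs' : |θ * (v j - v i)| ≤ 1/2 := by
          rw [show θ * (v j - v i) = -(θ * (v i - v j)) by ring, abs_neg]
          exact habs
        calc θ^2 * (v i - v j)^2 = (θ * (v j - v i))^2 := by ring
          _ ≤ _ := sq_le_sq_sub_int habs' (p j i)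
    · rw [if_neg hij, mul_zero]
      exact add_nonneg (hq_nonneg i j) (hq_nonneg j i)
  have hsum2 : (∑ i : Fin n, ∑ j : Fin n, (q i j + q j i)) = 2 * Q := by
    have h1 : (∑ i : Fin n, ∑ j : Fin n, q j i) = Q := by
      rw [Finset.sum_comm, hQdef]
    have h2 : (∑ i : Fin n, ∑ j : Fin n, q i j) = Q := hQdef.symm
    calc (∑ i : Fin n, ∑ j : Fin n, (q i j + q j i))
        = (∑ i : Fin n, ((∑ j : Fin n, q i j) + ∑ j : Fin n, q j i)) :=
          Finset.sum_congr rfl fun i _ => Finset.sum_add_distrib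
      _ = (∑ i : Fin n, ∑ j : Fin n, q i j) + ∑ i : Fin n, ∑ j : Fin n, q j i :=
          Finset.sum_add_distrib
      _ = 2 * Q := by rw [h1, h2]; ring
  have hWeq : (∑ i : Fin n, ∑ j : Fin n, (if i ∈ Sᶜ ∧ j ∈ Sᶜ then (v i - v j)^2 else 0))
      = ∑ i ∈ Sᶜ, ∑ j ∈ Sᶜ, (v i - v j)^2 := by
    calc (∑ i : Fin n, ∑ j : Fin n, (if i ∈ Sᶜ ∧ j ∈ Sᶜ then (v i - v j)^2 else 0))
        = ∑ i : Fin n, (if i ∈ Sᶜ then ∑ j ∈ Sᶜ, (v i - v j)^2 else 0) := by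
          refine Finset.sum_congr rfl fun i _ => ?_
          by_cases hi : i ∈ Sᶜ
          · simp only [hi, true_and, if_true]
            rw [Finset.sum_ite_mem, Finset.univ_inter]
          · simp [hi]
      _ = ∑ i ∈ Sᶜ, ∑ j ∈ Sᶜ, (v i - v j)^2 := by
          rw [Finset.sum_ite_mem, Finset.univ_inter]
  have hW : (33/49) * (n:ℝ) * ((33/49) * (δ * ρ^2)) ≤ ∑ i ∈ Sᶜ, ∑ j ∈ Sᶜ, (v i - v j)^2 := by
    calc (33/49) * (n:ℝ) * ((33/49) * (δ * ρ^2))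
        ≤ ((Sᶜ : Finset (Fin n)).card : ℝ) * ((33/49) * (δ * ρ^2)) :=
          mul_le_mul_of_nonneg_right hSccard (by positivity)
      _ = ∑ _i ∈ Sᶜ, (33/49) * (δ * ρ^2) := by rw [Finset.sum_const, nsmul_eq_mul]
      _ ≤ ∑ i ∈ Sᶜ, ∑ j ∈ Sᶜ, (v i - v j)^2 := Finset.sum_le_sum fun i _ => hrow i
  have hkey : θ^2 * ((33/49) * (n:ℝ) * ((33/49) * (δ * ρ^2))) ≤ 2 * Q := by
    calc θ^2 * ((33/49) * (n:ℝ) * ((33/49) * (δ * ρ^2)))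
        ≤ θ^2 * (∑ i ∈ Sᶜ, ∑ j ∈ Sᶜ, (v i - v j)^2) :=
          mul_le_mul_of_nonneg_left hW (sq_nonneg θ)
      _ = ∑ i : Fin n, ∑ j : Fin n, θ^2 * (if i ∈ Sᶜ ∧ j ∈ Sᶜ then (v i - v j)^2 else 0) := by
          rw [← hWeq, Finset.mul_sum]
          exact Finset.sum_congr rfl fun i _ => Finset.mul_sum _ _ _
      _ ≤ ∑ i : Fin n, ∑ j : Fin n, (q i j + q j i) :=
          Finset.sum_le_sum fun i _ => Finset.sum_le_sum fun j _ => hpt i j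
      _ = 2 * Q := hsum2
  -- upper bound on Q
  have hQlt : Q < 4 * γ^2 * θ^2 * n := by
    have h1 : Real.sqrt Q < 2 * (γ * θ) * Real.sqrt n := by
      refine lt_of_lt_of_le hd ?_
      have : γ * (θ * Dnorm n v) ≤ γ * (θ * (2 * Real.sqrt n)) :=
        mul_le_mul_of_nonneg_left
          (mul_le_mul_of_nonneg_left hDle hθ0.le) hγ0.le
      linarith [this]
    have h2 : (Real.sqrt Q)^2 < (2 * (γ * θ) * Real.sqrt n)^2 := by
      have hB : 0 ≤ Real.sqrt Q := Real.sqrt_nonneg _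
      exact pow_lt_pow_left₀ h1 hB two_ne_zero
    rw [Real.sq_sqrt hQ0] at h2
    calc Q < (2 * (γ * θ) * Real.sqrt n)^2 := h2
      _ = 4 * γ^2 * θ^2 * ((Real.sqrt n)^2) := by ring
      _ = 4 * γ^2 * θ^2 * n := by rw [Real.sq_sqrt hn'.le]
  -- final numeric contradiction
  have hX : (0:ℝ) < δ * ρ^2 * θ^2 * n := by positivity
  have hγ2 : γ^2 < (δ * ρ)^2 / 144 := by nlinarith
  nlinarith [hkey, hQlt, hX, mul_lt_mul_of_pos_right hδ1 hX,
    mul_lt_mul_of_pos_right hγ2 (show (0:ℝ) < θ^2 * n by positivity)]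
end

section
/- Let ξ be a real random variable with characteristic function φ(t) = E[exp(2πi ξ t)]. Then there is an absolute constant C such that for every ε > 0, sup_x P(|ξ − x| < ε) ≤ C ∫_{−1}^{1} |φ(θ/ε)| dθ. -/
open MeasureTheory

noncomputable def essPsi (a u : ℝ) : ℝ :=
  if u = 0 then 2 * a else Real.sin (2 * Real.pi * a * u) / (Real.pi * u)

lemma essPsi_cos (a u : ℝ) :
    (∫ t in (-a)..a, Real.cos (2 * Real.pi * u * t)) = essPsi a u := by
  rcases eq_or_ne u 0 with h | h
  · simp [essPsi, h, two_mul]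
  · have hc : (2 * Real.pi * u) ≠ 0 :=
      mul_ne_zero (mul_ne_zero two_ne_zero Real.pi_ne_zero) h
    rw [intervalIntegral.integral_comp_mul_left Real.cos hc, integral_cos]
    simp only [essPsi, if_neg h, mul_neg, Real.sin_neg, smul_eq_mul]
    rw [sub_neg_eq_add]
    have hπ := Real.pi_ne_zero
    field_simp
    ring_nf

lemma essPsi_sin (a u : ℝ) :
    (∫ t in (-a)..a, Real.sin (2 * Real.pi * u * t)) = 0 := by
  rcases eq_or_ne u 0 with h | h
  · simp [h]
  · have hc : (2 * Real.pi * u) ≠ 0 :=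
      mul_ne_zero (mul_ne_zero two_ne_zero Real.pi_ne_zero) h
    rw [intervalIntegral.integral_comp_mul_left Real.sin hc, integral_sin]
    simp [mul_neg, Real.cos_neg]

lemma essPsi_cexp (a u : ℝ) :
    (∫ t in (-a)..a, Complex.exp (Complex.I * ((2 * Real.pi * u * t : ℝ) : ℂ)))
      = ((essPsi a u : ℝ) : ℂ) := by
  have hrw : ∀ t : ℝ, Complex.exp (Complex.I * ((2 * Real.pi * u * t : ℝ) : ℂ))
      = ((Real.cos (2 * Real.pi * u * t) : ℝ) : ℂ)
        + ((Real.sin (2 * Real.pi * u * t) : ℝ) : ℂ) * Complex.I := by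
    intro t
    rw [mul_comm, Complex.exp_mul_I]
    simp [Complex.ofReal_cos, Complex.ofReal_sin]
  simp only [hrw]
  rw [intervalIntegral.integral_add, intervalIntegral.integral_mul_const,
    intervalIntegral.integral_ofReal, intervalIntegral.integral_ofReal,
    essPsi_cos, essPsi_sin]
  · simp
  · exact (Complex.continuous_ofReal.comp (Real.continuous_cos.comp (by continuity))).intervalIntegrable _ _
  · exact ((Complex.continuous_ofReal.comp (Real.continuous_sin.comp (by continuity))).mul continuous_const).intervalIntegrable _ _

lemma essPsi_neg (a u : ℝ) : essPsi a (-u) = essPsi a u := by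
  rcases eq_or_ne u 0 with h | h
  · simp [h]
  · simp only [essPsi, if_neg h, if_neg (neg_ne_zero.mpr h), mul_neg, Real.sin_neg,
      neg_div_neg_eq]

lemma essPsi_abs_le {a : ℝ} (ha : 0 ≤ a) (u : ℝ) : |essPsi a u| ≤ 2 * a := by
  rw [← essPsi_cos]
  have h := intervalIntegral.norm_integral_le_of_norm_le_const (C := 1)
    (f := fun t => Real.cos (2 * Real.pi * u * t)) (a := -a) (b := a)
    (fun t _ => by rw [Real.norm_eq_abs]; exact Real.abs_cos_le_one _)
  rw [Real.norm_eq_abs] at h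
  calc |∫ t in (-a)..a, Real.cos (2 * Real.pi * u * t)| ≤ 1 * |a - -a| := h
    _ = 2 * a := by rw [sub_neg_eq_add, abs_of_nonneg (by linarith)]; ring

lemma essPsi_lower_pos {ε u : ℝ} (hε : 0 < ε) (hu0 : 0 < u) (hu : u < ε) :
    1 / (Real.pi * ε) ≤ essPsi (1 / (4 * ε)) u := by
  have hπ := Real.pi_pos
  have harg : 2 * Real.pi * (1 / (4 * ε)) * u = Real.pi * u / (2 * ε) := by
    field_simp; ring
  rw [essPsi, if_neg hu0.ne', harg]
  have hy0 : 0 ≤ Real.pi * u / (2 * ε) := by positivity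
  have hy1 : Real.pi * u / (2 * ε) ≤ Real.pi / 2 := by
    rw [div_le_div_iff₀ (by positivity) two_pos]
    nlinarith
  have hs : 2 / Real.pi * (Real.pi * u / (2 * ε)) ≤ Real.sin (Real.pi * u / (2 * ε)) :=
    Real.mul_le_sin hy0 hy1
  have heq : 2 / Real.pi * (Real.pi * u / (2 * ε)) = u / ε := by field_simp
  rw [heq] at hs
  rw [div_le_div_iff₀ (by positivity) (by positivity)]
  calc 1 * (Real.pi * u) = Real.pi * ε * (u / ε) := by field_simp
    _ ≤ Real.pi * ε * Real.sin (Real.pi * u / (2 * ε)) := by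
        apply mul_le_mul_of_nonneg_left hs (by positivity)
    _ = Real.sin (Real.pi * u / (2 * ε)) * (Real.pi * ε) := by ring

lemma essPsi_lower {ε u : ℝ} (hε : 0 < ε) (hu : |u| < ε) :
    1 / (Real.pi * ε) ≤ essPsi (1 / (4 * ε)) u := by
  have hπ := Real.pi_pos
  rcases lt_trichotomy u 0 with h | h | h
  · rw [← essPsi_neg]
    exact essPsi_lower_pos hε (by linarith) (by rw [abs_of_neg h] at hu; linarith)
  · rw [h, essPsi, if_pos rfl]
    rw [show (2:ℝ) * (1 / (4 * ε)) = 1 / (2 * ε) by field_simp; ring,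
      div_le_div_iff₀ (by positivity) (by positivity)]
    nlinarith [Real.pi_gt_three]
  · exact essPsi_lower_pos hε h (by rwa [abs_of_pos h] at hu)

lemma essPsi_measurable (a : ℝ) : Measurable (essPsi a) := by
  unfold essPsi
  exact Measurable.ite (measurableSet_eq_fun measurable_id measurable_const)
    measurable_const (by fun_prop)

noncomputable def essE (u t : ℝ) : ℂ := Complex.exp (Complex.I * ((2 * Real.pi * u * t : ℝ) : ℂ))

lemma ess_abs_exp (y : ℝ) : ‖Complex.exp (Complex.I * (y : ℂ))‖ = 1 := by
  rw [Complex.norm_exp]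
  simp [Complex.mul_re]

lemma ess_norm_exp (y : ℝ) : ‖Complex.exp (Complex.I * (y : ℂ))‖ = 1 := by
  exact ess_abs_exp y

lemma ess_sq (a u : ℝ) :
    ((essPsi a u : ℝ) : ℂ)^2 = ∫ t in (-a)..a, ∫ s in (-a)..a, essE u (t - s) := by
  have h1 : ∀ t : ℝ, (∫ s in (-a)..a, essE u (t - s))
      = essE u t * ((essPsi a u : ℝ) : ℂ) := by
    intro t
    have h2 : ∀ s : ℝ, essE u (t - s) = essE u t * essE (-u) s := by
      intro s; unfold essE; rw [← Complex.exp_add]; congr 1; push_cast; ring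
    simp only [h2]
    rw [intervalIntegral.integral_const_mul]
    congr 1
    rw [show essE (-u) = fun s => Complex.exp (Complex.I * ((2 * Real.pi * (-u) * s : ℝ) : ℂ)) from rfl]
    rw [essPsi_cexp a (-u), essPsi_neg]
  simp only [h1]
  rw [intervalIntegral.integral_mul_const]
  rw [show essE u = fun t => Complex.exp (Complex.I * ((2 * Real.pi * u * t : ℝ) : ℂ)) from rfl]
  rw [essPsi_cexp a u]
  ring

section Main
variable {Ω : Type} [MeasurableSpace Ω] (μ : Measure Ω) [IsProbabilityMeasure μ]
  (ξ : Ω → ℝ) (hξ : Measurable ξ)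

include hξ in
lemma ess_phi_cont : Continuous (fun r : ℝ =>
    ∫ ω, Complex.exp (Complex.I * ((2 * Real.pi * ξ ω * r : ℝ) : ℂ)) ∂μ) := by
  apply continuous_of_dominated (bound := fun _ => (1:ℝ))
  · intro r
    apply Measurable.aestronglyMeasurable
    fun_prop
  · intro r
    filter_upwards with ω
    rw [ess_norm_exp]
  · exact integrable_const 1
  · filter_upwards with ω
    fun_prop

lemma ess_factor (x r : ℝ) :
    (∫ ω, essE (ξ ω - x) r ∂μ)
      = Complex.exp (Complex.I * ((2 * Real.pi * (-x) * r : ℝ) : ℂ))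
        * ∫ ω, Complex.exp (Complex.I * ((2 * Real.pi * ξ ω * r : ℝ) : ℂ)) ∂μ := by
  rw [← integral_const_mul]
  apply integral_congr_ae (ae_of_all _ fun ω => ?_)
  unfold essE
  rw [← Complex.exp_add]
  congr 1
  push_cast
  ring

include hξ in
lemma ess_fubini (x a : ℝ) (ha : 0 < a) :
    ∫ ω, (∫ t in (-a)..a, ∫ s in (-a)..a, essE (ξ ω - x) (t - s)) ∂μ
      = ∫ t in (-a)..a, ∫ s in (-a)..a, (∫ ω, essE (ξ ω - x) (t - s) ∂μ) := by
  have hle : (-a : ℝ) ≤ a := by linarith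
  set ν := volume.restrict (Set.Ioc (-a) a) with hν
  haveI : IsFiniteMeasure ν := by
    constructor
    rw [hν, Measure.restrict_apply_univ]
    exact measure_Ioc_lt_top
  have hconv : ∀ g : ℝ → ℂ, (∫ t in (-a)..a, g t) = ∫ t, g t ∂ν := fun g =>
    intervalIntegral.integral_of_le hle
  have hE : Measurable (fun q : Ω × ℝ × ℝ => essE (ξ q.1 - x) (q.2.1 - q.2.2)) := by
    unfold essE; fun_prop
  have hInt : Integrable (Function.uncurry fun (ω : Ω) (p : ℝ × ℝ) =>
      essE (ξ ω - x) (p.1 - p.2)) (μ.prod (ν.prod ν)) := by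
    constructor
    · exact (hE.comp (measurable_fst.prodMk
        ((measurable_fst.comp measurable_snd).prodMk
          (measurable_snd.comp measurable_snd)))).aestronglyMeasurable
    · apply HasFiniteIntegral.of_bounded (C := 1)
      filter_upwards with q
      exact le_of_eq (ess_norm_exp _)
  have hIntOmega : ∀ ω : Ω, Integrable (fun p : ℝ × ℝ => essE (ξ ω - x) (p.1 - p.2))
      (ν.prod ν) := by
    intro ω
    constructor
    · apply Measurable.aestronglyMeasurable
      unfold essE; fun_prop
    · apply HasFiniteIntegral.of_bounded (C := 1)
      filter_upwards with q
      exact le_of_eq (ess_norm_exp _)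
  calc ∫ ω, (∫ t in (-a)..a, ∫ s in (-a)..a, essE (ξ ω - x) (t - s)) ∂μ
      = ∫ ω, (∫ p : ℝ × ℝ, essE (ξ ω - x) (p.1 - p.2) ∂(ν.prod ν)) ∂μ := by
        apply integral_congr_ae (ae_of_all _ fun ω => ?_)
        simp only [hconv]
        exact (integral_prod _ (hIntOmega ω)).symm
    _ = ∫ p : ℝ × ℝ, (∫ ω, essE (ξ ω - x) (p.1 - p.2) ∂μ) ∂(ν.prod ν) :=
        integral_integral_swap hInt
    _ = ∫ t, ∫ s, (∫ ω, essE (ξ ω - x) (t - s) ∂μ) ∂ν ∂ν :=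
        integral_prod _ hInt.swap.integral_prod_left
    _ = ∫ t in (-a)..a, ∫ s in (-a)..a, (∫ ω, essE (ξ ω - x) (t - s) ∂μ) := by
        simp only [hconv]

end Main

/-- Esséen's anti-concentration inequality: for a real random variable `ξ` with
characteristic function `φ(t) = E exp(2πiξt)`, there is an absolute constant `C`
such that `L(ξ, ε) ≤ C ∫_{-1}^{1} |φ(θ/ε)| dθ` for every `ε > 0`. -/
theorem stmt_9 :
    ∃ C : ℝ, 0 < C ∧
      ∀ {Ω : Type} [MeasurableSpace Ω] (μ : Measure Ω), IsProbabilityMeasure μ →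
      ∀ (ξ : Ω → ℝ), Measurable ξ →
      ∀ ε : ℝ, 0 < ε → ∀ x : ℝ,
        (μ {ω | |ξ ω - x| < ε}).toReal
          ≤ C * ∫ θ in (-1:ℝ)..1,
              ‖∫ ω, Complex.exp (Complex.I *
                (2 * Real.pi * ξ ω * (θ / ε) : ℝ)) ∂μ‖ := by
  have hπ := Real.pi_pos
  refine ⟨Real.pi^2/2, by positivity, ?_⟩
  intro Ω _inst μ hμ ξ hξ ε hε x
  haveI := hμ
  set a : ℝ := 1/(4*ε) with ha
  have ha0 : 0 < a := by positivity
  have hle : (-a:ℝ) ≤ a := by linarith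
  set φ : ℝ → ℂ := fun r => ∫ ω, Complex.exp (Complex.I * ((2*Real.pi*ξ ω*r : ℝ):ℂ)) ∂μ
    with hφdef
  have hφc : Continuous φ := ess_phi_cont μ ξ hξ
  have hφabs : Continuous fun r => ‖φ r‖ := continuous_norm.comp hφc
  set S : Set Ω := {ω | |ξ ω - x| < ε} with hSdef
  have hSm : MeasurableSet S := measurableSet_lt (by fun_prop) measurable_const
  set g : Ω → ℝ := fun ω => essPsi a (ξ ω - x) with hgdef
  have hgm : Measurable g := (essPsi_measurable a).comp (hξ.sub measurable_const)
  have hg2int : Integrable (fun ω => (g ω)^2) μ := by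
    constructor
    · exact (hgm.pow_const 2).aestronglyMeasurable
    · apply HasFiniteIntegral.of_bounded (C := (2*a)^2)
      filter_upwards with ω
      rw [Real.norm_eq_abs, abs_pow]
      exact pow_le_pow_left₀ (abs_nonneg _) (essPsi_abs_le ha0.le _) 2
  -- Markov step
  have markov : (μ S).toReal * (1/(Real.pi*ε))^2 ≤ ∫ ω, (g ω)^2 ∂μ := by
    have hind : ∀ ω, S.indicator (fun _ => (1/(Real.pi*ε))^2) ω ≤ (g ω)^2 := by
      intro ω
      by_cases hω : ω ∈ S
      · rw [Set.indicator_of_mem hω]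
        have hl : 1/(Real.pi*ε) ≤ g ω := essPsi_lower hε hω
        exact pow_le_pow_left₀ (by positivity) hl 2
      · rw [Set.indicator_of_notMem hω]
        positivity
    calc (μ S).toReal * (1/(Real.pi*ε))^2
        = ∫ ω, S.indicator (fun _ => (1/(Real.pi*ε))^2) ω ∂μ := by
          rw [integral_indicator_const _ hSm, smul_eq_mul]; rfl
      _ ≤ ∫ ω, (g ω)^2 ∂μ :=
          integral_mono ((integrable_const _).indicator hSm) hg2int hind
  -- the key Fourier identity
  have hval : ((∫ ω, (g ω)^2 ∂μ : ℝ) : ℂ)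
      = ∫ t in (-a)..a, ∫ s in (-a)..a,
          (Complex.exp (Complex.I * ((2*Real.pi*(-x)*(t-s) : ℝ):ℂ)) * φ (t-s)) := by
    calc ((∫ ω, (g ω)^2 ∂μ : ℝ) : ℂ)
        = ∫ ω, (((g ω)^2 : ℝ) : ℂ) ∂μ := (integral_ofReal (𝕜 := ℂ)).symm
      _ = ∫ ω, (∫ t in (-a)..a, ∫ s in (-a)..a, essE (ξ ω - x) (t - s)) ∂μ := by
          apply integral_congr_ae (ae_of_all _ fun ω => ?_)
          push_cast
          exact ess_sq a (ξ ω - x)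
      _ = ∫ t in (-a)..a, ∫ s in (-a)..a, (∫ ω, essE (ξ ω - x) (t - s) ∂μ) :=
          ess_fubini μ ξ hξ x a ha0
      _ = ∫ t in (-a)..a, ∫ s in (-a)..a,
            (Complex.exp (Complex.I * ((2*Real.pi*(-x)*(t-s) : ℝ):ℂ)) * φ (t-s)) := by
          apply intervalIntegral.integral_congr (fun t _ => ?_)
          apply intervalIntegral.integral_congr (fun s _ => ?_)
          exact ess_factor μ ξ x (t - s)
  set B : ℝ := ∫ r in ((-1:ℝ)/ε)..(1/ε), ‖φ r‖ with hBdef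
  have h2a : 2*a ≤ 1/ε := by
    rw [ha, show (2:ℝ)*(1/(4*ε)) = 1/(2*ε) by field_simp; ring]
    exact one_div_le_one_div_of_le hε (by linarith)
  -- bound the double integral
  have hB : ‖∫ t in (-a)..a, ∫ s in (-a)..a,
      (Complex.exp (Complex.I * ((2*Real.pi*(-x)*(t-s) : ℝ):ℂ)) * φ (t-s))‖ ≤ B * (2*a) := by
    have hBnd : ∀ t ∈ Set.uIoc (-a) a, ‖∫ s in (-a)..a,
        (Complex.exp (Complex.I * ((2*Real.pi*(-x)*(t-s) : ℝ):ℂ)) * φ (t-s))‖ ≤ B := by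
      intro t ht
      rw [Set.uIoc_of_le hle] at ht
      calc ‖∫ s in (-a)..a,
            (Complex.exp (Complex.I * ((2*Real.pi*(-x)*(t-s) : ℝ):ℂ)) * φ (t-s))‖
          ≤ ∫ s in (-a)..a,
            ‖Complex.exp (Complex.I * ((2*Real.pi*(-x)*(t-s) : ℝ):ℂ)) * φ (t-s)‖ :=
            intervalIntegral.norm_integral_le_integral_norm hle
        _ = ∫ s in (-a)..a, ‖φ (t-s)‖ := by
            apply intervalIntegral.integral_congr (fun s _ => ?_)
            rw [norm_mul, ess_norm_exp, one_mul]
        _ = ∫ r in (t-a)..(t - -a), ‖φ r‖ :=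
            intervalIntegral.integral_comp_sub_left (fun r => ‖φ r‖) t
        _ ≤ B := by
          apply intervalIntegral.integral_mono_interval (c := (-1:ℝ)/ε) (d := 1/ε)
          · have h2a' : 2*a ≤ ε⁻¹ := by rwa [one_div] at h2a
            rw [neg_div, one_div]
            have : -a < t := ht.1
            linarith
          · linarith
          · have : t ≤ a := ht.2
            linarith
          · exact ae_of_all _ fun r => norm_nonneg _
          · exact hφabs.intervalIntegrable _ _
    calc ‖∫ t in (-a)..a, ∫ s in (-a)..a,
          (Complex.exp (Complex.I * ((2*Real.pi*(-x)*(t-s) : ℝ):ℂ)) * φ (t-s))‖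
        ≤ B * |a - -a| := intervalIntegral.norm_integral_le_of_norm_le_const hBnd
      _ = B * (2*a) := by
          rw [sub_neg_eq_add, abs_of_nonneg (by linarith)]
          ring
  have h1 : ∫ ω, (g ω)^2 ∂μ ≤ B * (2*a) := by
    have h2 := hB
    rw [← hval, Complex.norm_real, Real.norm_eq_abs,
      abs_of_nonneg (integral_nonneg fun ω => sq_nonneg _)] at h2
    exact h2
  have hcomp : (∫ θ in (-1:ℝ)..1, ‖φ (θ/ε)‖) = ε * B := by
    rw [show (∫ θ in (-1:ℝ)..1, ‖φ (θ/ε)‖)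
        = ε • ∫ r in ((-1:ℝ)/ε)..(1/ε), ‖φ r‖ from
        intervalIntegral.integral_comp_div (fun r => ‖φ r‖) hε.ne',
      smul_eq_mul]
  have hfin : (μ S).toReal * (1/(Real.pi*ε))^2 ≤ B * (2*a) := markov.trans h1
  show (μ S).toReal ≤ Real.pi^2/2 * ∫ θ in (-1:ℝ)..1, ‖φ (θ/ε)‖
  rw [hcomp]
  calc (μ S).toReal
      = ((μ S).toReal * (1/(Real.pi*ε))^2) * (Real.pi*ε)^2 := by
        field_simp
    _ ≤ (B * (2*a)) * (Real.pi*ε)^2 :=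
        mul_le_mul_of_nonneg_right hfin (by positivity)
    _ = Real.pi^2/2 * (ε * B) := by
        rw [ha]
        field_simp
        ring
end

section
/- Let f : {0,1}ⁿ → ℝ satisfy |f(x with i-th coordinate 1) − f(x with i-th coordinate 0)| ≤ dᵢ for all x ∈ {0,1}ⁿ and all i ∈ [n]. Let η be uniform on the set of {0,1}-vectors with exactly n/2 ones (n even). Then for all t ≥ 0, P(|f(η) − E f(η)| ≥ t) ≤ 2·exp(−t² / (8·Σᵢ dᵢ²)). -/
open Finset

def KSTones {n : ℕ} (x : Fin n → Bool) : ℕ :=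
  ((Finset.univ : Finset (Fin n)).filter (fun i => x i = true)).card

def KSTslice (n m : ℕ) : Finset (Fin n → Bool) :=
  (Finset.univ : Finset (Fin n → Bool)).filter (fun x => KSTones x = m)

lemma KSTones_eq_sum {n : ℕ} (x : Fin n → Bool) :
    KSTones x = ∑ i : Fin n, (if x i = true then 1 else 0) := by
  rw [KSTones, Finset.card_filter]

lemma KSTones_le {n : ℕ} (x : Fin n → Bool) : KSTones x ≤ n := by
  simpa [KSTones] using Finset.card_filter_le (Finset.univ : Finset (Fin n)) _

lemma KSTslice_zero (n : ℕ) : KSTslice n 0 = {fun _ => false} := by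
  ext x
  simp only [KSTslice, Finset.mem_filter, Finset.mem_univ, true_and, Finset.mem_singleton]
  constructor
  · intro h
    funext i
    by_contra hb
    have hx : x i = true := by cases hxi : x i <;> simp_all
    have : i ∈ (Finset.univ : Finset (Fin n)).filter (fun i => x i = true) := by simp [hx]
    rw [KSTones] at h
    simp [Finset.card_eq_zero] at h
    simp [h] at this
  · rintro rfl
    simp [KSTones]

lemma KSTslice_full (n : ℕ) : KSTslice n n = {fun _ => true} := by
  ext x
  simp only [KSTslice, Finset.mem_filter, Finset.mem_univ, true_and, Finset.mem_singleton]
  constructor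
  · intro h
    funext i
    by_contra hb
    have hx : x i = false := by cases hxi : x i <;> simp_all
    have hss : (Finset.univ : Finset (Fin n)).filter (fun i => x i = true) ⊆ Finset.univ.erase i := by
      intro j hj
      simp only [Finset.mem_filter] at hj
      refine Finset.mem_erase.2 ⟨?_, Finset.mem_univ _⟩
      rintro rfl; rw [hx] at hj; simp at hj
    have := Finset.card_le_card hss
    rw [KSTones] at h
    rw [h, Finset.card_erase_of_mem (Finset.mem_univ _), Finset.card_univ] at this
    have hn : 0 < n := i.pos
    simp [Fintype.card_fin] at this
    omega
  · rintro rfl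
    simp [KSTones]

lemma KSTslice_empty {n m : ℕ} (h : n < m) : KSTslice n m = ∅ := by
  ext x
  simp only [KSTslice, Finset.mem_filter, Finset.mem_univ, true_and, Finset.notMem_empty,
    iff_false]
  intro hx
  have := KSTones_le x
  omega

lemma KSTslice_nonempty {n m : ℕ} (h : m ≤ n) : (KSTslice n m).Nonempty := by
  refine ⟨fun i => decide ((i : ℕ) < m), ?_⟩
  simp only [KSTslice, Finset.mem_filter, Finset.mem_univ, true_and]
  simp only [KSTones, decide_eq_true_eq]
  rw [Finset.card_filter, Fin.sum_univ_eq_sum_range (fun i => if i < m then 1 else 0),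
    ← Finset.card_filter]
  have h2 : (Finset.range n).filter (fun i => i < m) = Finset.range m := by
    ext i; simp only [Finset.mem_filter, Finset.mem_range]; omega
  rw [h2, Finset.card_range]

lemma KSTones_cons {n : ℕ} (b : Bool) (y : Fin n → Bool) :
    KSTones (Fin.cons b y) = (if b = true then 1 else 0) + KSTones y := by
  rw [KSTones_eq_sum, KSTones_eq_sum, Fin.sum_univ_succ]
  simp [Fin.cons_zero, Fin.cons_succ]

lemma KSTones_update_true {n : ℕ} (y : Fin n → Bool) (j : Fin n) (h : y j = false) :
    KSTones (Function.update y j true) = KSTones y + 1 := by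
  rw [KSTones_eq_sum, KSTones_eq_sum,
    ← Finset.add_sum_erase _ _ (Finset.mem_univ j),
    ← Finset.add_sum_erase _ (fun i => if y i = true then 1 else 0) (Finset.mem_univ j)]
  have h1 : ∀ i ∈ Finset.univ.erase j,
      (if Function.update y j true i = true then 1 else 0) = if y i = true then 1 else 0 := by
    intro i hi
    rw [Function.update_of_ne (Finset.mem_erase.1 hi).1]
  rw [Finset.sum_congr rfl h1]
  simp [h]
  omega

lemma KSTones_update_false {n : ℕ} (y : Fin n → Bool) (j : Fin n) (h : y j = true) :
    KSTones (Function.update y j false) + 1 = KSTones y := by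
  have h2 : (Function.update y j false) j = false := by simp
  have h3 : Function.update (Function.update y j false) j true = y := by
    rw [Function.update_idem, ← h, Function.update_eq_self]
  have := KSTones_update_true (Function.update y j false) j h2
  rw [h3] at this
  omega

lemma KSTsum_slice_succ {n m : ℕ} (g : (Fin (n+1) → Bool) → ℝ) :
    ∑ x ∈ KSTslice (n+1) (m+1), g x
      = ∑ y ∈ KSTslice n m, g (Fin.cons true y)
        + ∑ y ∈ KSTslice n (m+1), g (Fin.cons false y) := by
  have key : ∀ (h : (Fin (n+1) → Bool) → ℝ),
      ∑ x : Fin (n+1) → Bool, h x = ∑ y : Fin n → Bool, h (Fin.cons true y)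
        + ∑ y : Fin n → Bool, h (Fin.cons false y) := by
    intro h
    rw [← Equiv.sum_comp (Fin.consEquiv (fun _ => Bool)) h, Fintype.sum_prod_type,
      Fintype.sum_bool]
    rfl
  rw [KSTslice, KSTslice, KSTslice, Finset.sum_filter, Finset.sum_filter, Finset.sum_filter,
    key]
  congr 1
  · refine Finset.sum_congr rfl fun y _ => ?_
    rw [KSTones_cons]
    exact if_congr (by simp; omega) rfl rfl
  · refine Finset.sum_congr rfl fun y _ => ?_
    rw [KSTones_cons]
    exact if_congr (by simp) rfl rfl

lemma KSTcard_slice_succ {n m : ℕ} :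
    ((KSTslice (n+1) (m+1)).card : ℝ)
      = ((KSTslice n m).card : ℝ) + ((KSTslice n (m+1)).card : ℝ) := by
  have := KSTsum_slice_succ (n := n) (m := m) (fun _ => (1:ℝ))
  simpa [Finset.sum_const, nsmul_eq_mul] using this

section Hoeffding

variable (s : ℝ)

private lemma KSTD_pos (hs0 : 0 ≤ s) (hs1 : s ≤ 1) (x : ℝ) :
    0 < s * Real.exp x + (1 - s) := by
  rcases eq_or_lt_of_le hs0 with rfl | hs
  · norm_num
  · have := mul_pos hs (Real.exp_pos x)
    linarith

private lemma KSThoeff_log (hs0 : 0 ≤ s) (hs1 : s ≤ 1) (h : ℝ) :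
    Real.log (s * Real.exp h + (1 - s)) ≤ s * h + h ^ 2 / 8 := by
  set D : ℝ → ℝ := fun x => s * Real.exp x + (1 - s) with hD
  have hDpos : ∀ x, 0 < D x := fun x => KSTD_pos s hs0 hs1 x
  set φ : ℝ → ℝ := fun x => x ^ 2 / 8 + s * x - Real.log (D x) with hφ
  set ψ : ℝ → ℝ := fun x => x / 4 + s - s * Real.exp x / D x with hψ
  have hDderiv : ∀ x, HasDerivAt D (s * Real.exp x) x := by
    intro x
    exact ((Real.hasDerivAt_exp x).const_mul s).add_const (1 - s)
  have hφderiv : ∀ x, HasDerivAt φ (ψ x) x := by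
    intro x
    have h1 : HasDerivAt (fun x : ℝ => x ^ 2 / 8) (x / 4) x := by
      have := (hasDerivAt_pow 2 x).div_const 8
      exact this.congr_deriv (by ring)
    have h2 : HasDerivAt (fun x : ℝ => s * x) s x := by
      simpa using (hasDerivAt_id x).const_mul s
    have h3 : HasDerivAt (fun x => Real.log (D x)) (s * Real.exp x / D x) x :=
      (hDderiv x).log (ne_of_gt (hDpos x))
    exact (h1.add h2).sub h3
  have hψderiv : ∀ x, HasDerivAt ψ (1 / 4 - s * Real.exp x * (1 - s) / (D x) ^ 2) x := by
    intro x
    have h1 : HasDerivAt (fun x : ℝ => x / 4 + s) (1 / 4) x := by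
      simpa using (hasDerivAt_id x).div_const 4 |>.add_const s
    have h2 : HasDerivAt (fun x => s * Real.exp x / D x)
        ((s * Real.exp x * D x - s * Real.exp x * (s * Real.exp x)) / (D x) ^ 2) x :=
      ((Real.hasDerivAt_exp x).const_mul s).div (hDderiv x) (ne_of_gt (hDpos x))
    have h2' : HasDerivAt (fun x => s * Real.exp x / D x)
        (s * Real.exp x * (1 - s) / (D x) ^ 2) x := by
      convert h2 using 1
      have : D x = s * Real.exp x + (1 - s) := rfl
      rw [this]
      ring
    exact h1.sub h2'
  have hψmono : Monotone ψ := by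
    apply monotone_of_deriv_nonneg
    · exact fun x => (hψderiv x).differentiableAt
    · intro x
      rw [(hψderiv x).deriv]
      have hD2 : (0:ℝ) < (D x) ^ 2 := pow_pos (hDpos x) 2
      rw [sub_nonneg, div_le_iff₀ hD2]
      have hDx : D x = s * Real.exp x + (1 - s) := rfl
      nlinarith [sq_nonneg (s * Real.exp x - (1 - s)), mul_nonneg (mul_nonneg hs0 (Real.exp_pos x).le) (sub_nonneg.2 hs1)]
  have hψ0 : ψ 0 = 0 := by
    have : D 0 = 1 := by simp [hD]
    simp [hψ, this]
  have hφ0 : φ 0 = 0 := by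
    have : D 0 = 1 := by simp [hD]
    simp [hφ, this]
  have hφdiff : Differentiable ℝ φ := fun x => (hφderiv x).differentiableAt
  have hmono : MonotoneOn φ (Set.Ici 0) := by
    apply monotoneOn_of_deriv_nonneg (convex_Ici 0) hφdiff.continuous.continuousOn
      (hφdiff.differentiableOn)
    intro x hx
    rw [interior_Ici] at hx
    rw [(hφderiv x).deriv]
    have := hψmono (le_of_lt hx)
    rw [hψ0] at this
    exact this
  have hanti : AntitoneOn φ (Set.Iic 0) := by
    apply antitoneOn_of_deriv_nonpos (convex_Iic 0) hφdiff.continuous.continuousOn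
      (hφdiff.differentiableOn)
    intro x hx
    rw [interior_Iic] at hx
    rw [(hφderiv x).deriv]
    have := hψmono (le_of_lt hx)
    rw [hψ0] at this
    exact this
  have hφnonneg : 0 ≤ φ h := by
    rcases le_total 0 h with hh | hh
    · have := hmono (Set.mem_Ici.2 le_rfl) (Set.mem_Ici.2 hh) hh
      rw [hφ0] at this
      exact this
    · have := hanti (Set.mem_Iic.2 hh) (Set.mem_Iic.2 le_rfl) hh
      rw [hφ0] at this
      exact this
  have : φ h = h ^ 2 / 8 + s * h - Real.log (D h) := rfl
  rw [this] at hφnonneg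
  have hDh : D h = s * Real.exp h + (1 - s) := rfl
  rw [hDh] at hφnonneg
  linarith

private lemma KSThoeff_pt (P Q a b : ℝ) (hP : 0 < P) (hQ : 0 < Q) (hab : P * a + Q * b = 0) :
    P * Real.exp a + Q * Real.exp b ≤ (P + Q) * Real.exp ((a - b) ^ 2 / 8) := by
  have hPQ : 0 < P + Q := by linarith
  set s : ℝ := P / (P + Q) with hs
  have hs0 : 0 ≤ s := div_nonneg hP.le hPQ.le
  have hs1 : s ≤ 1 := by
    rw [hs, div_le_one hPQ]; linarith
  set h : ℝ := a - b with hh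
  have hbval : b = -s * h := by
    have h1 : s * a + (1 - s) * b = 0 := by
      rw [hs]
      field_simp
      linarith [hab]
    have : s * (a - b) + b = 0 := by linarith [h1]
    rw [hh]; linarith
  have haval : a = (1 - s) * h := by rw [hh] at hbval ⊢; linarith
  have key : s * Real.exp h + (1 - s) ≤ Real.exp (s * h + h ^ 2 / 8) := by
    have hpos := KSTD_pos s hs0 hs1 h
    calc s * Real.exp h + (1 - s) = Real.exp (Real.log (s * Real.exp h + (1 - s))) :=
          (Real.exp_log hpos).symm
      _ ≤ Real.exp (s * h + h ^ 2 / 8) :=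
          Real.exp_le_exp.2 (KSThoeff_log s hs0 hs1 h)
  have main : s * Real.exp a + (1 - s) * Real.exp b ≤ Real.exp (h ^ 2 / 8) := by
    rw [haval, hbval]
    have e1 : Real.exp ((1 - s) * h) = Real.exp h * Real.exp (-s * h) := by
      rw [← Real.exp_add]; ring_nf
    have e2 : s * Real.exp ((1 - s) * h) + (1 - s) * Real.exp (-s * h)
        = (s * Real.exp h + (1 - s)) * Real.exp (-s * h) := by
      rw [e1]; ring
    rw [e2]
    calc (s * Real.exp h + (1 - s)) * Real.exp (-s * h)
        ≤ Real.exp (s * h + h ^ 2 / 8) * Real.exp (-s * h) := by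
          apply mul_le_mul_of_nonneg_right key (Real.exp_pos _).le
      _ = Real.exp (h ^ 2 / 8) := by rw [← Real.exp_add]; ring_nf
  have hfin : P * Real.exp a + Q * Real.exp b
      = (P + Q) * (s * Real.exp a + (1 - s) * Real.exp b) := by
    rw [hs]
    field_simp
    ring
  rw [hfin]
  exact mul_le_mul_of_nonneg_left main hPQ.le

end Hoeffding

lemma KSTzeros_card {n m : ℕ} (y : Fin n → Bool) (hy : KSTones y = m) :
    (Finset.univ.filter (fun j => y j = false)).card = n - m := by
  have h1 : Finset.univ.filter (fun j => y j = false)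
      = Finset.univ \ Finset.univ.filter (fun j => y j = true) := by
    ext j
    simp only [Finset.mem_filter, Finset.mem_univ, true_and, Finset.mem_sdiff]
    cases hyj : y j <;> simp
  rw [h1, Finset.card_sdiff_of_subset (Finset.filter_subset _ _), Finset.card_univ, Fintype.card_fin]
  rw [← KSTones, hy]

lemma KSTcross {n m' : ℕ} (hm : m' + 1 ≤ n) (d0 : ℝ) (d' : Fin n → ℝ)
    (hd' : ∀ j, d' j ≤ d0) (fT fF : (Fin n → Bool) → ℝ)
    (hTF : ∀ (y : Fin n → Bool) (j : Fin n), y j = false → KSTones y = m' →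
      |fT y - fF (Function.update y j true)| ≤ d0 + d' j) :
    |(∑ y ∈ KSTslice n m', fT y) / ((KSTslice n m').card : ℝ)
      - (∑ z ∈ KSTslice n (m'+1), fF z) / ((KSTslice n (m'+1)).card : ℝ)| ≤ 2 * d0 := by
  classical
  set B := KSTslice n m' with hBdef
  set A := KSTslice n (m'+1) with hAdef
  have hBne : B.Nonempty := KSTslice_nonempty (by omega)
  have hAne : A.Nonempty := KSTslice_nonempty hm
  have hBc : (0:ℝ) < B.card := by exact_mod_cast Finset.card_pos.2 hBne
  have hAc : (0:ℝ) < A.card := by exact_mod_cast Finset.card_pos.2 hAne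
  set PB := (B ×ˢ (Finset.univ : Finset (Fin n))).filter (fun p => p.1 p.2 = false) with hPBdef
  set QA := (A ×ˢ (Finset.univ : Finset (Fin n))).filter (fun p => p.1 p.2 = true) with hQAdef
  have memB : ∀ y, y ∈ B ↔ KSTones y = m' := by
    intro y; simp [hBdef, KSTslice]
  have memA : ∀ z, z ∈ A ↔ KSTones z = m' + 1 := by
    intro z; simp [hAdef, KSTslice]
  -- sums over PB of a function of the first coordinate
  have S1 : ∀ g : (Fin n → Bool) → ℝ,
      ∑ p ∈ PB, g p.1 = ((n - m' : ℕ) : ℝ) * ∑ y ∈ B, g y := by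
    intro g
    rw [hPBdef, Finset.sum_filter, Finset.sum_product, Finset.mul_sum]
    refine Finset.sum_congr rfl fun y hy => ?_
    have : ∑ j : Fin n, (if y j = false then g y else 0)
        = (Finset.univ.filter (fun j => y j = false)).card • g y := by
      rw [← Finset.sum_filter, Finset.sum_const]
    rw [this, KSTzeros_card y ((memB y).1 hy), nsmul_eq_mul]
  have S2 : ∀ g : (Fin n → Bool) → ℝ,
      ∑ q ∈ QA, g q.1 = ((m' + 1 : ℕ) : ℝ) * ∑ z ∈ A, g z := by
    intro g
    rw [hQAdef, Finset.sum_filter, Finset.sum_product, Finset.mul_sum]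
    refine Finset.sum_congr rfl fun z hz => ?_
    have : ∑ j : Fin n, (if z j = true then g z else 0)
        = (Finset.univ.filter (fun j => z j = true)).card • g z := by
      rw [← Finset.sum_filter, Finset.sum_const]
    rw [this, ← KSTones, (memA z).1 hz, nsmul_eq_mul]
  -- bijection between PB and QA
  have S3 : ∀ g : ((Fin n → Bool) × Fin n) → ℝ,
      ∑ p ∈ PB, g (Function.update p.1 p.2 true, p.2) = ∑ q ∈ QA, g q := by
    intro g
    refine Finset.sum_nbij' (fun p => (Function.update p.1 p.2 true, p.2))
      (fun q => (Function.update q.1 q.2 false, q.2)) ?_ ?_ ?_ ?_ ?_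
    · intro p hp
      rw [hPBdef, Finset.mem_filter, Finset.mem_product] at hp
      obtain ⟨⟨hp1, -⟩, hp2⟩ := hp
      rw [hQAdef, Finset.mem_filter, Finset.mem_product]
      refine ⟨⟨?_, Finset.mem_univ _⟩, by simp⟩
      rw [memA, KSTones_update_true p.1 p.2 hp2, (memB p.1).1 hp1]
    · intro q hq
      rw [hQAdef, Finset.mem_filter, Finset.mem_product] at hq
      obtain ⟨⟨hq1, -⟩, hq2⟩ := hq
      rw [hPBdef, Finset.mem_filter, Finset.mem_product]
      refine ⟨⟨?_, Finset.mem_univ _⟩, by simp⟩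
      rw [memB]
      show KSTones (Function.update q.1 q.2 false) = m'
      have := KSTones_update_false q.1 q.2 hq2
      rw [(memA q.1).1 hq1] at this
      omega
    · intro p hp
      rw [hPBdef, Finset.mem_filter] at hp
      have : Function.update (Function.update p.1 p.2 true) p.2 false = p.1 := by
        rw [Function.update_idem, ← hp.2, Function.update_eq_self]
      simp [this]
    · intro q hq
      rw [hQAdef, Finset.mem_filter] at hq
      have : Function.update (Function.update q.1 q.2 false) q.2 true = q.1 := by
        rw [Function.update_idem, ← hq.2, Function.update_eq_self]
      simp [this]
    · intro p _
      rfl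
  set k : ℕ := n - m' with hkdef
  have hk : 0 < k := by omega
  set N : ℝ := (k : ℝ) * B.card with hNdef
  have hN : 0 < N := by
    apply mul_pos _ hBc
    exact_mod_cast hk
  have hcount : ((m' + 1 : ℕ) : ℝ) * A.card = N := by
    have := S3 (fun _ => (1:ℝ))
    rw [S2 (fun _ => (1:ℝ))] at this
    have h1 := S1 (fun _ => (1:ℝ))
    simp only [Finset.sum_const, nsmul_eq_mul, mul_one] at this h1
    rw [hNdef, ← h1, this]
  have e1 : (∑ y ∈ B, fT y) / (B.card : ℝ) = (∑ p ∈ PB, fT p.1) / N := by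
    rw [S1, hNdef, mul_div_mul_left]
    exact_mod_cast hk.ne'
  have e2 : (∑ z ∈ A, fF z) / (A.card : ℝ)
      = (∑ p ∈ PB, fF (Function.update p.1 p.2 true)) / N := by
    have h3 : ∑ p ∈ PB, fF (Function.update p.1 p.2 true) = ∑ q ∈ QA, fF q.1 :=
      S3 (fun q => fF q.1)
    have hne : ((m' + 1 : ℕ) : ℝ) ≠ 0 := by positivity
    rw [h3, S2, ← hcount, mul_div_mul_left _ _ hne]
  rw [e1, e2, div_sub_div_same, abs_div, abs_of_pos hN, div_le_iff₀ hN]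
  have hNcard : (PB.card : ℝ) = N := by
    have := S1 (fun _ => (1:ℝ))
    simpa [mul_one] using this
  calc |∑ p ∈ PB, fT p.1 - ∑ p ∈ PB, fF (Function.update p.1 p.2 true)|
      = |∑ p ∈ PB, (fT p.1 - fF (Function.update p.1 p.2 true))| := by
        rw [Finset.sum_sub_distrib]
    _ ≤ ∑ p ∈ PB, |fT p.1 - fF (Function.update p.1 p.2 true)| :=
        Finset.abs_sum_le_sum_abs _ _
    _ ≤ ∑ p ∈ PB, (2 * d0) := by
        refine Finset.sum_le_sum fun p hp => ?_
        rw [hPBdef, Finset.mem_filter, Finset.mem_product] at hp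
        have := hTF p.1 p.2 hp.2 ((memB p.1).1 hp.1.1)
        have := hd' p.2
        linarith
    _ = PB.card * (2 * d0) := by rw [Finset.sum_const, nsmul_eq_mul]
    _ = 2 * d0 * N := by rw [hNcard]; ring

lemma KSTsum_sq_nonneg {n : ℕ} (d : Fin n → ℝ) : 0 ≤ ∑ i, d i ^ 2 :=
  Finset.sum_nonneg fun i _ => sq_nonneg _

lemma KSTmgf_of_singleton {n m : ℕ} (c : Fin n → Bool) (h : KSTslice n m = {c})
    (f : (Fin n → Bool) → ℝ) (l : ℝ) (C : ℝ) (hC : 0 ≤ C) :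
    ∑ x ∈ KSTslice n m,
        Real.exp (l * (f x - (∑ y ∈ KSTslice n m, f y) / ((KSTslice n m).card : ℝ)))
      ≤ ((KSTslice n m).card : ℝ) * Real.exp C := by
  rw [h]
  simp only [Finset.sum_singleton, Finset.card_singleton, Nat.cast_one, div_one, sub_self,
    mul_zero, Real.exp_zero, one_mul]
  exact Real.one_le_exp hC

set_option maxHeartbeats 1000000 in
lemma KSTmgf (n : ℕ) : ∀ (m : ℕ) (d : Fin n → ℝ), (∀ i j : Fin n, i ≤ j → d j ≤ d i) →
    ∀ (f : (Fin n → Bool) → ℝ),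
      (∀ x i, |f (Function.update x i true) - f (Function.update x i false)| ≤ d i) →
    ∀ l : ℝ,
    ∑ x ∈ KSTslice n m,
        Real.exp (l * (f x - (∑ y ∈ KSTslice n m, f y) / ((KSTslice n m).card : ℝ)))
      ≤ ((KSTslice n m).card : ℝ) * Real.exp (2 * l ^ 2 * ∑ i, d i ^ 2) := by
  induction n with
  | zero =>
    intro m d hd f hf l
    match m with
    | 0 =>
      exact KSTmgf_of_singleton _ (KSTslice_zero 0) f l _
        (mul_nonneg (by positivity) (KSTsum_sq_nonneg d))
    | m + 1 =>
      rw [KSTslice_empty (by omega)]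
      simp
  | succ n ih =>
    intro m d hd f hf l
    have hC : 0 ≤ 2 * l ^ 2 * ∑ i, d i ^ 2 :=
      mul_nonneg (by positivity) (KSTsum_sq_nonneg d)
    match m with
    | 0 => exact KSTmgf_of_singleton _ (KSTslice_zero (n+1)) f l _ hC
    | m + 1 =>
      rcases lt_trichotomy n m with hnm | rfl | hm
      · -- slice empty or full
        rcases Nat.lt_or_ge (n+1) (m+1) with h1 | h2
        · rw [KSTslice_empty h1]
          simp
        · have hmn : m = n := by omega
          have hfull : KSTslice (n+1) (m+1) = {fun _ => true} := by
            rw [hmn]; exact KSTslice_full _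
          exact KSTmgf_of_singleton _ hfull f l _ hC
      · exact KSTmgf_of_singleton _ (KSTslice_full _) f l _ hC
      · -- main case : m + 1 ≤ n
        set B := KSTslice n m with hBdef
        set A := KSTslice n (m+1) with hAdef
        set S := KSTslice (n+1) (m+1) with hSdef
        have hBne : B.Nonempty := KSTslice_nonempty (by omega)
        have hAne : A.Nonempty := KSTslice_nonempty (by omega)
        have hP : (0:ℝ) < B.card := by exact_mod_cast Finset.card_pos.2 hBne
        have hQ : (0:ℝ) < A.card := by exact_mod_cast Finset.card_pos.2 hAne
        set fT : (Fin n → Bool) → ℝ := fun y => f (Fin.cons true y) with hfTdef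
        set fF : (Fin n → Bool) → ℝ := fun y => f (Fin.cons false y) with hfFdef
        set d' : Fin n → ℝ := fun i => d i.succ with hd'def
        have hd' : ∀ i j : Fin n, i ≤ j → d' j ≤ d' i := fun i j hij =>
          hd i.succ j.succ (by simpa using hij)
        have hfT : ∀ y i, |fT (Function.update y i true) - fT (Function.update y i false)|
            ≤ d' i := by
          intro y i
          have e1 : fT (Function.update y i true)
              = f (Function.update (Fin.cons true y : Fin (n+1) → Bool) i.succ true) := by
            rw [hfTdef]; simp only [Fin.cons_update]
          have e2 : fT (Function.update y i false)
              = f (Function.update (Fin.cons true y : Fin (n+1) → Bool) i.succ false) := by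
            rw [hfTdef]; simp only [Fin.cons_update]
          rw [e1, e2]
          exact hf _ i.succ
        have hfF : ∀ y i, |fF (Function.update y i true) - fF (Function.update y i false)|
            ≤ d' i := by
          intro y i
          have e1 : fF (Function.update y i true)
              = f (Function.update (Fin.cons false y) i.succ true) := by
            rw [hfFdef]; simp only [Fin.cons_update]
          have e2 : fF (Function.update y i false)
              = f (Function.update (Fin.cons false y) i.succ false) := by
            rw [hfFdef]; simp only [Fin.cons_update]
          rw [e1, e2]
          exact hf _ i.succ
        set μ : ℝ := (∑ x ∈ S, f x) / (S.card : ℝ) with hμdef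
        set μT : ℝ := (∑ y ∈ B, fT y) / (B.card : ℝ) with hμTdef
        set μF : ℝ := (∑ y ∈ A, fF y) / (A.card : ℝ) with hμFdef
        have IHT := ih m d' hd' fT hfT l
        have IHF := ih (m+1) d' hd' fF hfF l
        have hd0 : 0 ≤ d 0 := le_trans (abs_nonneg _) (hf (fun _ => false) 0)
        -- cross bound
        have hcross : |μT - μF| ≤ 2 * d 0 := by
          refine KSTcross hm (d 0) d' (fun j => hd 0 j.succ (Fin.zero_le _)) fT fF ?_
          intro y j hyj hones
          have step1 : |fT y - fT (Function.update y j true)| ≤ d' j := by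
            have hz : (Fin.cons true y : Fin (n+1) → Bool) j.succ = false := by
              rwa [Fin.cons_succ]
            have e1 : fT (Function.update y j true)
                = f (Function.update (Fin.cons true y : Fin (n+1) → Bool) j.succ true) := by
              rw [hfTdef]; simp only [Fin.cons_update]
            have e2 : fT y
                = f (Function.update (Fin.cons true y : Fin (n+1) → Bool) j.succ false) := by
              rw [hfTdef]
              simp only
              congr 1
              rw [← hz, Function.update_eq_self]
            rw [e1, e2, abs_sub_comm]
            exact hf _ j.succ
          have step2 : |fT (Function.update y j true) - fF (Function.update y j true)|
              ≤ d 0 := by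
            have e1 : fT (Function.update y j true)
                = f (Function.update (Fin.cons true (Function.update y j true) : Fin (n+1) → Bool) 0 true) := by
              rw [hfTdef]; simp only [Fin.update_cons_zero]
            have e2 : fF (Function.update y j true)
                = f (Function.update (Fin.cons true (Function.update y j true) : Fin (n+1) → Bool) 0 false) := by
              rw [hfFdef]; simp only [Fin.update_cons_zero]
            rw [e1, e2]
            exact hf _ 0
          calc |fT y - fF (Function.update y j true)|
              ≤ |fT y - fT (Function.update y j true)|
                + |fT (Function.update y j true) - fF (Function.update y j true)| :=
                abs_sub_le _ _ _
            _ ≤ d' j + d 0 := add_le_add step1 step2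
            _ = d 0 + d' j := by ring
        -- decomposition of sums
        have hsum_f : ∑ x ∈ S, f x = ∑ y ∈ B, fT y + ∑ y ∈ A, fF y :=
          KSTsum_slice_succ f
        have hcard : (S.card : ℝ) = (B.card : ℝ) + (A.card : ℝ) := KSTcard_slice_succ
        have hScard_pos : (0:ℝ) < S.card := by rw [hcard]; linarith
        set a : ℝ := l * (μT - μ) with hadef
        set b : ℝ := l * (μF - μ) with hbdef
        have hab : (B.card : ℝ) * a + (A.card : ℝ) * b = 0 := by
          rw [hadef, hbdef, hμTdef, hμFdef, hμdef]
          field_simp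
          rw [hsum_f, hcard]
          ring
        have hoeff := KSThoeff_pt (B.card : ℝ) (A.card : ℝ) a b hP hQ hab
        have habs : (a - b) ^ 2 / 8 ≤ l ^ 2 * d 0 ^ 2 / 2 := by
          have h1 : a - b = l * (μT - μF) := by rw [hadef, hbdef]; ring
          have h2 : (μT - μF) ^ 2 ≤ (2 * d 0) ^ 2 := by
            rw [← sq_abs]
            have := abs_nonneg (μT - μF)
            nlinarith [hcross]
          rw [h1]
          have h3 : (l * (μT - μF)) ^ 2 = l ^ 2 * (μT - μF) ^ 2 := by ring
          rw [h3]
          nlinarith [sq_nonneg l]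
        -- assemble
        have hdecomp : ∑ x ∈ S, Real.exp (l * (f x - μ))
            = ∑ y ∈ B, Real.exp (l * (fT y - μ)) + ∑ y ∈ A, Real.exp (l * (fF y - μ)) :=
          KSTsum_slice_succ (fun x => Real.exp (l * (f x - μ)))
        have hsplitT : ∑ y ∈ B, Real.exp (l * (fT y - μ))
            = (∑ y ∈ B, Real.exp (l * (fT y - μT))) * Real.exp a := by
          rw [Finset.sum_mul]
          refine Finset.sum_congr rfl fun y _ => ?_
          rw [← Real.exp_add]
          congr 1
          rw [hadef]; ring
        have hsplitF : ∑ y ∈ A, Real.exp (l * (fF y - μ))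
            = (∑ y ∈ A, Real.exp (l * (fF y - μF))) * Real.exp b := by
          rw [Finset.sum_mul]
          refine Finset.sum_congr rfl fun y _ => ?_
          rw [← Real.exp_add]
          congr 1
          rw [hbdef]; ring
        set E' : ℝ := Real.exp (2 * l ^ 2 * ∑ i, d' i ^ 2) with hE'def
        have hE'pos : 0 < E' := Real.exp_pos _
        have hstep : ∑ x ∈ S, Real.exp (l * (f x - μ))
            ≤ E' * ((B.card : ℝ) * Real.exp a + (A.card : ℝ) * Real.exp b) := by
          rw [hdecomp, hsplitT, hsplitF]
          have t1 : (∑ y ∈ B, Real.exp (l * (fT y - μT))) * Real.exp a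
              ≤ ((B.card : ℝ) * E') * Real.exp a :=
            mul_le_mul_of_nonneg_right IHT (Real.exp_pos _).le
          have t2 : (∑ y ∈ A, Real.exp (l * (fF y - μF))) * Real.exp b
              ≤ ((A.card : ℝ) * E') * Real.exp b :=
            mul_le_mul_of_nonneg_right IHF (Real.exp_pos _).le
          calc (∑ y ∈ B, Real.exp (l * (fT y - μT))) * Real.exp a
                + (∑ y ∈ A, Real.exp (l * (fF y - μF))) * Real.exp b
              ≤ ((B.card : ℝ) * E') * Real.exp a + ((A.card : ℝ) * E') * Real.exp b :=
              add_le_add t1 t2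
            _ = E' * ((B.card : ℝ) * Real.exp a + (A.card : ℝ) * Real.exp b) := by ring
        have hfinal : E' * ((B.card : ℝ) * Real.exp a + (A.card : ℝ) * Real.exp b)
            ≤ (S.card : ℝ) * Real.exp (2 * l ^ 2 * ∑ i, d i ^ 2) := by
          calc E' * ((B.card : ℝ) * Real.exp a + (A.card : ℝ) * Real.exp b)
              ≤ E' * (((B.card : ℝ) + (A.card : ℝ)) * Real.exp ((a - b) ^ 2 / 8)) :=
                mul_le_mul_of_nonneg_left hoeff hE'pos.le
            _ = (S.card : ℝ) * (E' * Real.exp ((a - b) ^ 2 / 8)) := by rw [hcard]; ring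
            _ ≤ (S.card : ℝ) * Real.exp (2 * l ^ 2 * ∑ i, d i ^ 2) := by
                apply mul_le_mul_of_nonneg_left _ hScard_pos.le
                rw [hE'def, ← Real.exp_add]
                apply Real.exp_le_exp.2
                have hsum : ∑ i : Fin (n+1), d i ^ 2 = d 0 ^ 2 + ∑ i : Fin n, d' i ^ 2 := by
                  rw [Fin.sum_univ_succ]
                rw [hsum]
                have := habs
                have h0 : 0 ≤ l ^ 2 * d 0 ^ 2 := by positivity
                have h4 : Real.exp ((a-b)^2/8) ≤ Real.exp (l ^ 2 * d 0 ^ 2 / 2) :=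
                  Real.exp_le_exp.2 habs
                nlinarith [sq_nonneg l, sq_nonneg (d 0), Real.exp_le_exp.2 habs]
          -- note: goal after exp_le_exp handled above
        calc ∑ x ∈ S, Real.exp (l * (f x - μ))
            ≤ E' * ((B.card : ℝ) * Real.exp a + (A.card : ℝ) * Real.exp b) := hstep
          _ ≤ (S.card : ℝ) * Real.exp (2 * l ^ 2 * ∑ i, d i ^ 2) := hfinal

def KSTperm {n : ℕ} (σ : Equiv.Perm (Fin n)) : (Fin n → Bool) ≃ (Fin n → Bool) where
  toFun := fun x => x ∘ σ
  invFun := fun x => x ∘ σ.symm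
  left_inv := fun x => by funext i; simp
  right_inv := fun x => by funext i; simp

lemma KSTones_comp {n : ℕ} (σ : Equiv.Perm (Fin n)) (x : Fin n → Bool) :
    KSTones (x ∘ σ) = KSTones x := by
  rw [KSTones_eq_sum, KSTones_eq_sum]
  exact Equiv.sum_comp σ (fun i => if x i = true then 1 else 0)

lemma KSTsum_comp {n m : ℕ} (σ : Equiv.Perm (Fin n)) (g : (Fin n → Bool) → ℝ) :
    ∑ x ∈ KSTslice n m, g (x ∘ σ) = ∑ x ∈ KSTslice n m, g x := by
  rw [KSTslice, Finset.sum_filter, Finset.sum_filter]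
  refine Fintype.sum_equiv (KSTperm σ) _ _ fun x => ?_
  have h1 : KSTperm σ x = x ∘ σ := rfl
  rw [h1, KSTones_comp]

set_option maxHeartbeats 1000000 in
/-- Combinatorial concentration inequality of Kwan–Sudakov–Tran: if `f` on the
discrete cube has coordinate Lipschitz constants `dᵢ`, and `η` is uniform on the
slice of `{0,1}ⁿ`-vectors with exactly `n/2` ones, then `f(η)` concentrates. -/
theorem stmt_14 (n : ℕ) (he : Even n) (f : (Fin n → Bool) → ℝ) (d : Fin n → ℝ)
    (hf : ∀ (x : Fin n → Bool) (i : Fin n),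
      |f (Function.update x i true) - f (Function.update x i false)| ≤ d i)
    (t : ℝ) (ht : 0 ≤ t) :
    let T := (Finset.univ : Finset (Fin n → Bool)).filter
      (fun x => ((Finset.univ : Finset (Fin n)).filter (fun i => x i = true)).card = n / 2)
    let Ef := (∑ x ∈ T, f x) / (T.card : ℝ)
    ((T.filter (fun x => t ≤ |f x - Ef|)).card : ℝ) / (T.card : ℝ)
      ≤ 2 * Real.exp (-(t^2) / (8 * ∑ i, (d i)^2)) := by
  intro T Ef
  have hT : T = KSTslice n (n / 2) := rfl
  set D : ℝ := ∑ i, (d i) ^ 2 with hDdef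
  have hD0 : 0 ≤ D := KSTsum_sq_nonneg d
  have hTne : T.Nonempty := by rw [hT]; exact KSTslice_nonempty (Nat.div_le_self n 2)
  have hTc : (0:ℝ) < T.card := by exact_mod_cast Finset.card_pos.2 hTne
  rcases eq_or_lt_of_le hD0 with hD | hD
  · -- degenerate case D = 0
    rw [← hD]
    norm_num
    rw [div_le_iff₀ hTc]
    have h1 : ((T.filter (fun x => t ≤ |f x - Ef|)).card : ℝ) ≤ (T.card : ℝ) := by
      exact_mod_cast Finset.card_le_card (Finset.filter_subset _ _)
    linarith
  · -- main case D > 0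
    set σ : Equiv.Perm (Fin n) := Tuple.sort (fun i => -d i) with hσdef
    have hσmono : Monotone ((fun i => -d i) ∘ σ) := Tuple.monotone_sort (fun i => -d i)
    set d₁ : Fin n → ℝ := fun i => d (σ i) with hd₁def
    have hd₁ : ∀ i j : Fin n, i ≤ j → d₁ j ≤ d₁ i := by
      intro i j hij
      have := hσmono hij
      simp only [Function.comp_apply, neg_le_neg_iff] at this
      exact this
    set f₁ : (Fin n → Bool) → ℝ := fun x => f (fun i => x (σ.symm i)) with hf₁def
    have keyupd : ∀ (x : Fin n → Bool) (j : Fin n) (b : Bool),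
        (fun i => (Function.update x j b) (σ.symm i)) =
          Function.update (fun i => x (σ.symm i)) (σ j) b := by
      intro x j b
      funext i
      rcases eq_or_ne i (σ j) with rfl | hne
      · rw [Equiv.symm_apply_apply, Function.update_self, Function.update_self]
      · have h2 : σ.symm i ≠ j := by
          intro h
          exact hne (by rw [← h, Equiv.apply_symm_apply])
        rw [Function.update_of_ne h2, Function.update_of_ne hne]
    have hf₁ : ∀ (x : Fin n → Bool) (j : Fin n),
        |f₁ (Function.update x j true) - f₁ (Function.update x j false)| ≤ d₁ j := by
      intro x j
      rw [hf₁def]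
      simp only
      rw [keyupd, keyupd]
      exact hf _ (σ j)
    have hcomp : ∀ x : Fin n → Bool, f₁ (x ∘ σ) = f x := by
      intro x
      rw [hf₁def]
      simp only
      congr 1
      funext i
      simp
    have hsum_eq : ∑ x ∈ T, f₁ x = ∑ x ∈ T, f x := by
      rw [hT, ← KSTsum_comp σ f₁]
      exact Finset.sum_congr rfl fun x _ => hcomp x
    have hD_eq : ∑ i, (d₁ i) ^ 2 = D := by
      rw [hDdef, hd₁def]
      exact Equiv.sum_comp σ (fun i => d i ^ 2)
    have hMGF : ∀ l : ℝ, ∑ x ∈ T, Real.exp (l * (f x - Ef))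
        ≤ (T.card : ℝ) * Real.exp (2 * l ^ 2 * D) := by
      intro l
      have main := KSTmgf n (n / 2) d₁ hd₁ f₁ hf₁ l
      rw [hD_eq, ← hT] at main
      have hEf : (∑ y ∈ T, f₁ y) / (T.card : ℝ) = Ef := by rw [hsum_eq]
      rw [hEf] at main
      have htrans : ∑ x ∈ T, Real.exp (l * (f x - Ef))
          = ∑ x ∈ T, Real.exp (l * (f₁ x - Ef)) := by
        rw [hT, ← KSTsum_comp σ (fun x => Real.exp (l * (f₁ x - Ef)))]
        exact Finset.sum_congr rfl fun x _ => by rw [hcomp x]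
      rw [htrans]
      exact main
    -- Chernoff bound for one tail
    have tail : ∀ g : (Fin n → Bool) → ℝ,
        (∀ l : ℝ, ∑ x ∈ T, Real.exp (l * g x) ≤ (T.card : ℝ) * Real.exp (2 * l ^ 2 * D)) →
        ((T.filter (fun x => t ≤ g x)).card : ℝ)
          ≤ (T.card : ℝ) * Real.exp (-(t ^ 2) / (8 * D)) := by
      intro g hg
      set l : ℝ := t / (4 * D) with hldef
      have hl0 : 0 ≤ l := by positivity
      have h1 : ((T.filter (fun x => t ≤ g x)).card : ℝ) * Real.exp (l * t)
          = ∑ _x ∈ T.filter (fun x => t ≤ g x), Real.exp (l * t) := by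
        rw [Finset.sum_const, nsmul_eq_mul]
      have h2 : ∑ _x ∈ T.filter (fun x => t ≤ g x), Real.exp (l * t)
          ≤ ∑ x ∈ T.filter (fun x => t ≤ g x), Real.exp (l * g x) := by
        refine Finset.sum_le_sum fun x hx => ?_
        apply Real.exp_le_exp.2
        exact mul_le_mul_of_nonneg_left (Finset.mem_filter.1 hx).2 hl0
      have h3 : ∑ x ∈ T.filter (fun x => t ≤ g x), Real.exp (l * g x)
          ≤ ∑ x ∈ T, Real.exp (l * g x) :=
        Finset.sum_le_sum_of_subset_of_nonneg (Finset.filter_subset _ _)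
          (fun x _ _ => (Real.exp_pos _).le)
      have hcomb : ((T.filter (fun x => t ≤ g x)).card : ℝ) * Real.exp (l * t)
          ≤ (T.card : ℝ) * Real.exp (2 * l ^ 2 * D) := by
        rw [h1]
        exact le_trans h2 (le_trans h3 (hg l))
      have h4 := (le_div_iff₀ (Real.exp_pos (l * t))).2 hcomb
      have harg : (T.card : ℝ) * Real.exp (2 * l ^ 2 * D) / Real.exp (l * t)
          = (T.card : ℝ) * Real.exp (-(t ^ 2) / (8 * D)) := by
        rw [mul_div_assoc, ← Real.exp_sub]
        congr 1
        rw [hldef]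
        field_simp
        ring
      rwa [harg] at h4
    have hup := tail (fun x => f x - Ef) hMGF
    have hlow := tail (fun x => Ef - f x) (by
      intro l
      have := hMGF (-l)
      have heq : ∑ x ∈ T, Real.exp (-l * (f x - Ef)) = ∑ x ∈ T, Real.exp (l * (Ef - f x)) := by
        refine Finset.sum_congr rfl fun x _ => ?_
        congr 1
        ring
      rw [heq] at this
      have heq2 : 2 * (-l) ^ 2 * D = 2 * l ^ 2 * D := by ring
      rwa [heq2] at this)
    have hsub : T.filter (fun x => t ≤ |f x - Ef|)
        ⊆ T.filter (fun x => t ≤ f x - Ef) ∪ T.filter (fun x => t ≤ Ef - f x) := by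
      intro x hx
      obtain ⟨hxT, hxt⟩ := Finset.mem_filter.1 hx
      rcases le_abs.1 hxt with h | h
      · exact Finset.mem_union_left _ (Finset.mem_filter.2 ⟨hxT, h⟩)
      · exact Finset.mem_union_right _ (Finset.mem_filter.2 ⟨hxT, by linarith⟩)
    have hcount : ((T.filter (fun x => t ≤ |f x - Ef|)).card : ℝ)
        ≤ ((T.filter (fun x => t ≤ f x - Ef)).card : ℝ)
          + ((T.filter (fun x => t ≤ Ef - f x)).card : ℝ) := by
      have := le_trans (Finset.card_le_card hsub) (Finset.card_union_le _ _)
      exact_mod_cast this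
    rw [div_le_iff₀ hTc]
    calc ((T.filter (fun x => t ≤ |f x - Ef|)).card : ℝ)
        ≤ ((T.filter (fun x => t ≤ f x - Ef)).card : ℝ)
          + ((T.filter (fun x => t ≤ Ef - f x)).card : ℝ) := hcount
      _ ≤ (T.card : ℝ) * Real.exp (-(t ^ 2) / (8 * D))
          + (T.card : ℝ) * Real.exp (-(t ^ 2) / (8 * D)) := add_le_add hup hlow
      _ = 2 * Real.exp (-(t ^ 2) / (8 * D)) * (T.card : ℝ) := by ring
end

section
/- Let n be even and n ≥ 10, let n/2 ≤ m ≤ n, and let M be a random m×n matrix whose rows are independent and each uniformly distributed on {0,1}-vectors with exactly n/2 ones. Then for every fixed unit vector v ∈ 𝕊^{n−1}, with r = |v₁+...+vₙ|, one has E‖Mv‖² = m(n−2)r²/(4(n−1)) + mn/(4(n−1)) ≥ (r² + 1)n/9. -/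
open Finset

lemma count_subset {n : ℕ} (t : Finset (Fin n)) (k : ℕ) (hck : t.card ≤ k) :
    ((univ.powersetCard k).filter (fun s => t ⊆ s)).card
      = (n - t.card).choose (k - t.card) := by
  have key : ((univ.powersetCard k).filter (fun s => t ⊆ s)).card
      = (tᶜ.powersetCard (k - t.card)).card := by
    apply Finset.card_bij' (fun s _ => s \ t) (fun s _ => s ∪ t)
    · intro s hs
      simp only [mem_filter, mem_powersetCard_univ] at hs
      rw [mem_powersetCard]
      refine ⟨fun x hx => ?_, ?_⟩
      · simp only [mem_compl]
        exact (mem_sdiff.1 hx).2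
      · rw [card_sdiff_of_subset hs.2, hs.1]
    · intro s hs
      rw [mem_powersetCard] at hs
      have hdisj : Disjoint s t := by
        exact le_compl_iff_disjoint_right.1 hs.1
      simp only [mem_filter, mem_powersetCard_univ]
      refine ⟨?_, subset_union_right⟩
      rw [card_union_of_disjoint hdisj, hs.2]
      omega
    · intro s hs
      simp only [mem_filter] at hs
      exact sdiff_union_of_subset hs.2
    · intro s hs
      rw [mem_powersetCard] at hs
      have hdisj : Disjoint s t := by
        exact le_compl_iff_disjoint_right.1 hs.1
      exact union_sdiff_cancel_right hdisj
  rw [key, card_powersetCard, card_compl, Fintype.card_fin]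

lemma sum_eval {m : ℕ} {S : Type*} [Fintype S] [DecidableEq S] (k : Fin m) (f : S → ℝ) :
    ∑ w : Fin m → S, f (w k) = (Fintype.card S : ℝ) ^ (m - 1) * ∑ s, f s := by
  classical
  rw [Fintype.sum_equiv (Equiv.piSplitAt k (fun _ : Fin m => S))
    (fun w => f (w k)) (fun p => f p.1) (fun w => rfl)]
  rw [Fintype.sum_prod_type]
  have hcard : Fintype.card {j : Fin m // j ≠ k} = m - 1 := by
    simp [Fintype.card_subtype_compl]
  simp only [Finset.sum_const, Finset.card_univ, Fintype.card_fun, hcard,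
    nsmul_eq_mul, Nat.cast_pow]
  rw [Finset.mul_sum]

set_option maxHeartbeats 1600000 in
/-- Expected squared norm of `Mv` where the rows of the random `m × n` matrix `M`
are independent and each uniformly distributed on `{0,1}`-vectors with exactly
`n/2` ones (encoded by a uniformly random tuple of `n/2`-element subsets),
together with the lower bound `(r²+1)n/9`. -/
theorem stmt_18 (n m : ℕ) (he : Even n) (h10 : 10 ≤ n) (hm1 : n/2 ≤ m) (hm2 : m ≤ n)
    (v : Fin n → ℝ) (hv : ∑ i, (v i)^2 = 1) :
    (∑ w : Fin m → {s : Finset (Fin n) // s.card = n/2},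
        ∑ k : Fin m, (∑ i ∈ (w k).1, v i)^2)
      / (Fintype.card (Fin m → {s : Finset (Fin n) // s.card = n/2}) : ℝ)
    = (m:ℝ) * ((n:ℝ) - 2) * (∑ i, v i)^2 / (4 * ((n:ℝ) - 1))
      + (m:ℝ) * (n:ℝ) / (4 * ((n:ℝ) - 1))
    ∧ ((∑ i, v i)^2 + 1) * (n:ℝ) / 9
      ≤ (m:ℝ) * ((n:ℝ) - 2) * (∑ i, v i)^2 / (4 * ((n:ℝ) - 1))
        + (m:ℝ) * (n:ℝ) / (4 * ((n:ℝ) - 1)) := by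
  classical
  obtain ⟨t, ht⟩ := he
  have hk5 : 5 ≤ n / 2 := by omega
  have hm1' : 1 ≤ m := by omega
  set r : ℝ := ∑ i, v i with hr
  set N : ℝ := (n.choose (n/2) : ℝ) with hN
  set c1 : ℝ := ((n-1).choose (n/2-1) : ℝ) with hc1def
  set c2 : ℝ := ((n-2).choose (n/2-2) : ℝ) with hc2def
  have hn0 : (n:ℝ) ≠ 0 := Nat.cast_ne_zero.mpr (by omega)
  have hn10 : (10:ℝ) ≤ (n:ℝ) := by exact_mod_cast h10
  have hNpos : (0:ℝ) < N := by
    rw [hN]; exact_mod_cast Nat.choose_pos (by omega : n/2 ≤ n)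
  -- cardinality of the subtype
  have hcardS : (Fintype.card {s : Finset (Fin n) // s.card = n/2} : ℝ) = N := by
    have h := Fintype.card_finset_len (α := Fin n) (n/2)
    rw [Fintype.card_fin] at h
    rw [hN, h]
  -- nat choose identities
  have e1 : n - 1 + 1 = n := by omega
  have e2 : n/2 - 1 + 1 = n/2 := by omega
  have e3 : n - 2 + 1 = n - 1 := by omega
  have e4 : n/2 - 2 + 1 = n/2 - 1 := by omega
  have hA : n * (n-1).choose (n/2-1) = n.choose (n/2) * (n/2) := by
    have := Nat.add_one_mul_choose_eq (n-1) (n/2-1)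
    simpa [Nat.succ_eq_add_one, e1, e2] using this
  have hB : (n-1) * (n-2).choose (n/2-2) = (n-1).choose (n/2-1) * (n/2-1) := by
    have := Nat.add_one_mul_choose_eq (n-2) (n/2-2)
    simpa [Nat.succ_eq_add_one, e3, e4] using this
  have hA' : (n:ℝ) * c1 = N * ((n/2 : ℕ):ℝ) := by
    rw [hc1def, hN]; exact_mod_cast hA
  have hB' : ((n:ℝ) - 1) * c2 = c1 * (((n/2 : ℕ):ℝ) - 1) := by
    rw [hc2def, hc1def]
    have := congrArg (Nat.cast : ℕ → ℝ) hB
    push_cast [Nat.cast_sub (show 1 ≤ n by omega), Nat.cast_sub (show 1 ≤ n/2 by omega)] at this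
    convert this using 2 <;> push_cast [Nat.cast_sub (show 1 ≤ n by omega)] <;> ring
  have h2k : ((n/2 : ℕ):ℝ) * 2 = (n:ℝ) := by
    have : n/2 * 2 = n := by omega
    exact_mod_cast this
  have hc1 : c1 * 2 = N := by
    have h : c1 * 2 * (n:ℝ) = N * (n:ℝ) := by
      linear_combination 2*hA' + N*h2k
    exact mul_right_cancel₀ hn0 h
  have hc2 : c2 * (4 * ((n:ℝ)-1)) = N * ((n:ℝ)-2) := by
    linear_combination 4*hB' + 2*c1*h2k + ((n:ℝ)-2)*hc1
  -- compute T = sum over subsets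
  have hT : (∑ s : {s : Finset (Fin n) // s.card = n/2}, (∑ i ∈ s.1, v i)^2)
      = c2 * r^2 + (c1 - c2) := by
    rw [← Finset.sum_subtype (univ.powersetCard (n/2))
      (fun s => mem_powersetCard_univ) (fun s => (∑ i ∈ s, v i)^2)]
    have expand : ∀ s ∈ univ.powersetCard (n/2), (∑ i ∈ s, v i)^2
        = ∑ i : Fin n, ∑ j : Fin n,
            (if i ∈ s then (if j ∈ s then v i * v j else 0) else 0) := by
      intro s _
      rw [sq, Finset.sum_mul_sum]
      have h1 : ∀ i, ∑ j ∈ s, v i * v j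
          = ∑ j : Fin n, if j ∈ s then v i * v j else 0 := by
        intro i; rw [Finset.sum_ite_mem, univ_inter]
      rw [show (∑ i ∈ s, ∑ j ∈ s, v i * v j)
          = ∑ i : Fin n, if i ∈ s then ∑ j ∈ s, v i * v j else 0 by
        rw [Finset.sum_ite_mem, univ_inter]]
      refine Finset.sum_congr rfl fun i _ => ?_
      by_cases h : i ∈ s
      · simp only [h, if_true, h1 i]
      · simp [h]
    rw [Finset.sum_congr rfl expand, Finset.sum_comm]
    have swap2 : ∀ i : Fin n, (∑ s ∈ univ.powersetCard (n/2), ∑ j : Fin n,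
          (if i ∈ s then (if j ∈ s then v i * v j else 0) else 0))
        = ∑ j : Fin n, ∑ s ∈ univ.powersetCard (n/2),
          (if i ∈ s then (if j ∈ s then v i * v j else 0) else 0) := fun i =>
      Finset.sum_comm
    rw [Finset.sum_congr rfl fun i _ => swap2 i]
    have inner : ∀ i j : Fin n,
        (∑ s ∈ univ.powersetCard (n/2),
          (if i ∈ s then (if j ∈ s then v i * v j else 0) else 0))
        = (if i = j then c1 else c2) * (v i * v j) := by
      intro i j
      have hite : ∀ s : Finset (Fin n),
          (if i ∈ s then (if j ∈ s then v i * v j else 0) else 0)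
          = if ({i, j} : Finset (Fin n)) ⊆ s then v i * v j else 0 := by
        intro s
        by_cases h1 : i ∈ s <;> by_cases h2 : j ∈ s <;>
          simp [Finset.insert_subset_iff, h1, h2]
      simp_rw [hite]
      rw [← Finset.sum_filter, Finset.sum_const, nsmul_eq_mul]
      by_cases hij : i = j
      · subst hij
        have hcard : ({i, i} : Finset (Fin n)).card = 1 := by simp
        rw [count_subset _ _ (by rw [hcard]; omega), hcard]
        simp [hc1def]
      · have hcard : ({i, j} : Finset (Fin n)).card = 2 := by
          rw [Finset.card_insert_of_notMem (by simp [hij]), Finset.card_singleton]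
        rw [count_subset _ _ (by rw [hcard]; omega), hcard]
        simp [hij, hc2def]
    rw [Finset.sum_congr rfl fun i _ => Finset.sum_congr rfl fun j _ => inner i j]
    have split : ∀ i j : Fin n, (if i = j then c1 else c2) * (v i * v j)
        = c2 * (v i * v j) + (if i = j then (c1 - c2) * (v i * v j) else 0) := by
      intro i j; by_cases h : i = j <;> simp [h] <;> ring
    simp_rw [split, Finset.sum_add_distrib]
    have part1 : (∑ i : Fin n, ∑ j : Fin n, c2 * (v i * v j)) = c2 * r^2 := by
      rw [hr, sq, Finset.sum_mul_sum, Finset.mul_sum]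
      exact Finset.sum_congr rfl fun i _ => by rw [Finset.mul_sum]
    have part2 : (∑ i : Fin n, ∑ j : Fin n,
        (if i = j then (c1 - c2) * (v i * v j) else 0)) = c1 - c2 := by
      have : ∀ i : Fin n, (∑ j : Fin n,
          (if i = j then (c1 - c2) * (v i * v j) else 0)) = (c1 - c2) * (v i)^2 := by
        intro i
        rw [Finset.sum_ite_eq univ i (fun j => (c1 - c2) * (v i * v j))]
        simp [sq]
      rw [Finset.sum_congr rfl fun i _ => this i, ← Finset.mul_sum, hv, mul_one]
    rw [part1, part2]
  -- numerator
  have hnum : (∑ w : Fin m → {s : Finset (Fin n) // s.card = n/2},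
        ∑ k : Fin m, (∑ i ∈ (w k).1, v i)^2)
      = (m:ℝ) * N^(m-1) * (c2 * r^2 + (c1 - c2)) := by
    rw [Finset.sum_comm]
    have : ∀ k : Fin m, (∑ w : Fin m → {s : Finset (Fin n) // s.card = n/2},
        (∑ i ∈ (w k).1, v i)^2) = N^(m-1) * (c2 * r^2 + (c1 - c2)) := by
      intro k
      rw [sum_eval k (fun s : {s : Finset (Fin n) // s.card = n/2} => (∑ i ∈ s.1, v i)^2), hT, hcardS]
    rw [Finset.sum_congr rfl fun k _ => this k, Finset.sum_const, Finset.card_univ,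
      Fintype.card_fin, nsmul_eq_mul]
    ring
  have hden : (Fintype.card (Fin m → {s : Finset (Fin n) // s.card = n/2}) : ℝ)
      = N^m := by
    rw [Fintype.card_fun, Fintype.card_fin, Nat.cast_pow, hcardS]
  have hpow : N^m = N^(m-1) * N := by
    rw [← pow_succ]; congr 1; omega
  have hmain : (∑ w : Fin m → {s : Finset (Fin n) // s.card = n/2},
        ∑ k : Fin m, (∑ i ∈ (w k).1, v i)^2)
      / (Fintype.card (Fin m → {s : Finset (Fin n) // s.card = n/2}) : ℝ)
    = (m:ℝ) * ((n:ℝ) - 2) * r^2 / (4 * ((n:ℝ) - 1))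
      + (m:ℝ) * (n:ℝ) / (4 * ((n:ℝ) - 1)) := by
    rw [hnum, hden, hpow, ← add_div,
      div_eq_div_iff (mul_pos (pow_pos hNpos _) hNpos).ne' (by nlinarith : (0:ℝ) < 4 * ((n:ℝ)-1)).ne']
    linear_combination (N^(m-1)*((m:ℝ)*r^2 - (m:ℝ)))*hc2
      + (N^(m-1)*(2*((n:ℝ)-1)*(m:ℝ)))*hc1
  refine ⟨hmain, ?_⟩
  have hnm : (n:ℝ) ≤ 2*(m:ℝ) := by
    have : n ≤ 2*m := by omega
    exact_mod_cast this
  rw [← add_div, div_le_div_iff₀ (by norm_num) (by nlinarith : (0:ℝ) < 4 * ((n:ℝ)-1))]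
  nlinarith [sq_nonneg r,
    mul_nonneg (mul_nonneg (show (0:ℝ) ≤ 2*(m:ℝ) - n by linarith)
      (show (0:ℝ) ≤ (n:ℝ) - 2 by linarith)) (sq_nonneg r),
    mul_nonneg (mul_nonneg (show (0:ℝ) ≤ (n:ℝ) by linarith)
      (show (0:ℝ) ≤ (n:ℝ) - 10 by linarith)) (sq_nonneg r),
    mul_nonneg (show (0:ℝ) ≤ 2*(m:ℝ) - n by linarith) (show (0:ℝ) ≤ (n:ℝ) by linarith)]
end
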